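/- arXiv:1505.06300 — 2 statements merged into one kernel-verified Lean document; each statement's English description precedes it below -/
import Mathlib

section
/- Let Z = x²·∂/∂x + (−λ + a₁x − c(y₁y₂))·y₁·∂/∂y₁ + (λ + a₂x + c(y₁y₂))·y₂·∂/∂y₂ and Z' = x²·∂/∂x + (−λ + a₁'x − c'(y₁y₂))·y₁·∂/∂y₁ + (λ + a₂'x + c'(y₁y₂))·y₂·∂/∂y₂ be two transversally Hamiltonian normal forms with the same λ ∈ ℂ\{0}, where a₁+a₂ = a₁'+a₂' = 1 and c, c' ∈ v·ℂ[[v]]. If some transversally symplectic formal diffeomorphism conjugates Z to Z', then a₁ = a₁', a₂ = a₂' and c = c'. -/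
open MvPowerSeries

noncomputable section

/-- `R3` is the ring `ℂ[[x, y₁, y₂]]` of formal power series in three variables, where
variable `0` plays the role of `x`, variable `1` of `y₁` and variable `2` of `y₂`. -/
abbrev R3 : Type := MvPowerSeries (Fin 3) ℂ

/-- Build a formal power series from its coefficient function. -/
def mk3 (g : (Fin 3 →₀ ℕ) → ℂ) : R3 := g

/-- Coefficient of the monomial with exponents `m` in `f`. -/
def cf (m : Fin 3 →₀ ℕ) (f : R3) : ℂ := MvPowerSeries.coeff m f

/-- The exponent vector of the monomial `x^{k₀} y₁^{k₁} y₂^{k₂}`. -/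
def e (k₀ k₁ k₂ : ℕ) : Fin 3 →₀ ℕ :=
  Finsupp.single 0 k₀ + Finsupp.single 1 k₁ + Finsupp.single 2 k₂

/-- Formal partial derivative with respect to the `i`-th variable. -/
def pd (i : Fin 3) (f : R3) : R3 :=
  mk3 fun m => ((m i : ℂ) + 1) * cf (m + Finsupp.single i 1) f

/-- The formal vector field (derivation) `b 0 · ∂/∂x + b 1 · ∂/∂y₁ + b 2 · ∂/∂y₂`. -/
def VF (b : Fin 3 → R3) (f : R3) : R3 := ∑ i : Fin 3, b i * pd i f

/-- The maximal ideal `𝔪` of `ℂ[[x,y₁,y₂]]` (series with zero constant term). -/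
def mI : Ideal R3 := RingHom.ker (MvPowerSeries.constantCoeff)

/-- The variables, as power series. -/
def Xv (i : Fin 3) : R3 := MvPowerSeries.X i

/-- Constant power series. -/
def Cc (a : ℂ) : R3 := MvPowerSeries.C a

/-- The matrix of linear coefficients of a triple of power series. -/
def linM (φ : Fin 3 → R3) : Matrix (Fin 3) (Fin 3) ℂ :=
  Matrix.of fun i j => cf (Finsupp.single j 1) (φ i)

/-- `φ` is a formal diffeomorphism: a triple in `𝔪³` with invertible linear part. -/
def IsDiffeo (φ : Fin 3 → R3) : Prop :=
  (∀ i, MvPowerSeries.constantCoeff (φ i) = 0) ∧ IsUnit (linM φ).det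

/-- `φ` is fibered: its first component is the variable `x`. -/
def IsFibered (φ : Fin 3 → R3) : Prop := φ 0 = Xv 0

/-- Pullback (substitution) action: `pb φ f = f(φ 0, φ 1, φ 2)`, written coefficientwise
(the sum below has only finitely many nonzero terms when each `φ i` has zero constant
term, which is the case for formal diffeomorphisms). -/
def pb (φ : Fin 3 → R3) (f : R3) : R3 :=
  mk3 fun k => ∑' m : Fin 3 →₀ ℕ, cf m f * cf k (∏ i : Fin 3, φ i ^ (m i))

/-- `Φ` conjugates `Y` to `Z` (that is, `Z = Φ_*(Y)`): `Φ*(Z(f)) = Y(Φ*(f))` for all `f`. -/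
def Conj (φ Y Z : Fin 3 → R3) : Prop :=
  ∀ f : R3, pb φ (VF Z f) = VF Y (pb φ f)

/-- The power series `c(y₁ y₂)` obtained from a one-variable series `c` by substituting
`v = y₁ y₂`. -/
def csub (c : PowerSeries ℂ) : R3 :=
  mk3 fun m => if m 0 = 0 ∧ m 1 = m 2 then PowerSeries.coeff (m 1) c else 0

/-- Components of the normal form
`x²∂/∂x + (−λ + a₁x + c₁(y₁y₂))y₁∂/∂y₁ + (λ + a₂x + c₂(y₁y₂))y₂∂/∂y₂`. -/
def NF (l a₁ a₂ : ℂ) (c₁ c₂ : PowerSeries ℂ) : Fin 3 → R3 :=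
  ![Xv 0 ^ 2,
    (Cc (-l) + Cc a₁ * Xv 0 + csub c₁) * Xv 1,
    (Cc l + Cc a₂ * Xv 0 + csub c₂) * Xv 2]

/-- Components of a doubly-resonant saddle-node in prepared form
`x²∂/∂x + (−λy₁ + F₁)∂/∂y₁ + (λy₂ + F₂)∂/∂y₂`. -/
def SN (l : ℂ) (F₁ F₂ : R3) : Fin 3 → R3 :=
  ![Xv 0 ^ 2, Cc (-l) * Xv 1 + F₁, Cc l * Xv 2 + F₂]

/-- The residue of the prepared saddle-node with nonlinear parts `F₁, F₂`: the coefficient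
of `x y₁` in `F₁` plus the coefficient of `x y₂` in `F₂`. -/
def resid (F₁ F₂ : R3) : ℂ := cf (e 1 1 0) F₁ + cf (e 1 0 1) F₂

/-- `z` is not a nonpositive rational number. -/
def NotQle0 (z : ℂ) : Prop := ∀ q : ℚ, q ≤ 0 → z ≠ (q : ℂ)

/-- `φ` is transversally symplectic (with respect to `ω = dy₁∧dy₂/x` and `dx`):
it is fibered and `(∂φ₁/∂y₁)(∂φ₂/∂y₂) − (∂φ₁/∂y₂)(∂φ₂/∂y₁) = 1`. -/
def TransSymp (φ : Fin 3 → R3) : Prop :=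
  φ 0 = Xv 0 ∧ pd 1 (φ 1) * pd 2 (φ 2) - pd 2 (φ 1) * pd 1 (φ 2) = 1

/-- `b` depends only on the variable `x`. -/
def OnlyX (b : R3) : Prop := ∀ m : Fin 3 →₀ ℕ, (m 1 ≠ 0 ∨ m 2 ≠ 0) → cf m b = 0

/-- The vector field with components `b` is transversally Hamiltonian (w.r.t.
`ω = dy₁∧dy₂/x` and `dx`): `b 0 ∈ x·ℂ[[x]]` and `x·(∂b₁/∂y₁ + ∂b₂/∂y₂) = b 0`. -/
def TransHam (b : Fin 3 → R3) : Prop :=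
  OnlyX (b 0) ∧ MvPowerSeries.constantCoeff (b 0) = 0 ∧
    Xv 0 * (pd 1 (b 1) + pd 2 (b 2)) = b 0


/-! ### Auxiliary development -/

namespace NFUniq

@[simp] lemma cf_mk3 (g : (Fin 3 →₀ ℕ) → ℂ) (m : Fin 3 →₀ ℕ) : cf m (mk3 g) = g m := rfl

lemma e_apply0 (k p q : ℕ) : e k p q 0 = k := by
  simp [e, Finsupp.single_apply]

lemma e_apply1 (k p q : ℕ) : e k p q 1 = p := by
  simp [e, Finsupp.single_apply]

lemma e_apply2 (k p q : ℕ) : e k p q 2 = q := by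
  simp [e, Finsupp.single_apply]

lemma eq_e (m : Fin 3 →₀ ℕ) : m = e (m 0) (m 1) (m 2) := by
  ext i
  fin_cases i <;> simp [e, Finsupp.single_apply]

lemma e_eq_e {k p q k' p' q' : ℕ} : e k p q = e k' p' q' ↔ (k = k' ∧ p = p' ∧ q = q') := by
  constructor
  · intro h
    refine ⟨?_, ?_, ?_⟩
    · have := congrArg (fun f : Fin 3 →₀ ℕ => f 0) h
      simpa [e_apply0] using this
    · have := congrArg (fun f : Fin 3 →₀ ℕ => f 1) h
      simpa [e_apply1] using this
    · have := congrArg (fun f : Fin 3 →₀ ℕ => f 2) h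
      simpa [e_apply2] using this
  · rintro ⟨rfl, rfl, rfl⟩; rfl

lemma e_zero : e 0 0 0 = 0 := by
  ext i; fin_cases i <;> simp [e, Finsupp.single_apply]

/-- degree of a monomial -/
def deg (m : Fin 3 →₀ ℕ) : ℕ := m 0 + m 1 + m 2

lemma deg_e (k p q : ℕ) : deg (e k p q) = k + p + q := by
  simp [deg, e_apply0, e_apply1, e_apply2]

lemma deg_add {a b m : Fin 3 →₀ ℕ} (h : a + b = m) : deg a + deg b = deg m := by
  have h0 := congrArg (fun f : Fin 3 →₀ ℕ => f 0) h
  have h1 := congrArg (fun f : Fin 3 →₀ ℕ => f 1) h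
  have h2 := congrArg (fun f : Fin 3 →₀ ℕ => f 2) h
  simp only [Finsupp.add_apply] at h0 h1 h2
  simp [deg]; omega

lemma deg_eq_zero {m : Fin 3 →₀ ℕ} (h : deg m = 0) : m = 0 := by
  have h0 : m 0 = 0 ∧ m 1 = 0 ∧ m 2 = 0 := by simp [deg] at h; omega
  ext i; fin_cases i <;> simp [h0.1, h0.2.1, h0.2.2]

lemma cf_pd (i : Fin 3) (m : Fin 3 →₀ ℕ) (f : R3) :
    cf m (pd i f) = ((m i : ℂ) + 1) * cf (m + Finsupp.single i 1) f := rfl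

lemma cf_add (m : Fin 3 →₀ ℕ) (f g : R3) : cf m (f + g) = cf m f + cf m g :=
  map_add (MvPowerSeries.coeff m) f g

lemma cf_neg (m : Fin 3 →₀ ℕ) (f : R3) : cf m (-f) = -cf m f :=
  map_neg (MvPowerSeries.coeff m) f

end NFUniq

namespace NFUniq

lemma Xv_eq_monomial (i : Fin 3) :
    Xv i = MvPowerSeries.monomial (Finsupp.single i 1) 1 := by
  rw [Xv, ← MvPowerSeries.X_pow_eq i 1, pow_one]

lemma cf_X_mul (i : Fin 3) (m : Fin 3 →₀ ℕ) (f : R3) :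
    cf m (Xv i * f) = if m i = 0 then 0 else cf (m - Finsupp.single i 1) f := by
  rw [Xv_eq_monomial, cf, MvPowerSeries.coeff_monomial_mul]
  by_cases h : m i = 0
  · rw [if_neg, if_pos h]
    rw [Finsupp.single_le_iff, h]; omega
  · rw [if_pos, if_neg h, one_mul]; rfl
    rw [Finsupp.single_le_iff]; omega

lemma cf_X0sq_mul (m : Fin 3 →₀ ℕ) (f : R3) :
    cf m (Xv 0 ^ 2 * f) =
      if 2 ≤ m 0 then cf (m - Finsupp.single 0 2) f else 0 := by
  rw [Xv, MvPowerSeries.X_pow_eq, cf, MvPowerSeries.coeff_monomial_mul]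
  by_cases h : 2 ≤ m 0
  · rw [if_pos h, if_pos (Finsupp.single_le_iff.2 h), one_mul]; rfl
  · rw [if_neg h, if_neg (fun hh => h (Finsupp.single_le_iff.1 hh))]

lemma cf_C_mul (a : ℂ) (m : Fin 3 →₀ ℕ) (f : R3) : cf m (Cc a * f) = a * cf m f :=
  MvPowerSeries.coeff_C_mul m f a

lemma cf_csub (c : PowerSeries ℂ) (m : Fin 3 →₀ ℕ) :
    cf m (csub c) = if m 0 = 0 ∧ m 1 = m 2 then PowerSeries.coeff (m 1) c else 0 := rfl

lemma csub_neg (c : PowerSeries ℂ) : csub (-c) = -csub c := by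
  ext m
  rw [← cf, ← cf, cf_neg, cf_csub, cf_csub]
  split <;> simp

/-- coefficient of a product with `csub c` on the left. -/
lemma cf_csub_mul (c : PowerSeries ℂ) (k p q : ℕ) (h : R3) :
    cf (e k p q) (csub c * h) =
      ∑ j ∈ Finset.range (min p q + 1),
        PowerSeries.coeff j c * cf (e k (p - j) (q - j)) h := by
  classical
  rw [cf, MvPowerSeries.coeff_mul]
  rw [show (∑ x ∈ Finset.HasAntidiagonal.antidiagonal (e k p q),
      MvPowerSeries.coeff x.1 (csub c) * MvPowerSeries.coeff x.2 h) =
      ∑ x ∈ Finset.HasAntidiagonal.antidiagonal (e k p q),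
        (if x.1 0 = 0 ∧ x.1 1 = x.1 2 then
          PowerSeries.coeff (x.1 1) c * MvPowerSeries.coeff x.2 h else 0) from
    Finset.sum_congr rfl fun x _ => by
      rw [← cf, cf_csub]; split <;> simp]
  rw [Finset.sum_ite, Finset.sum_const_zero, add_zero]
  refine Finset.sum_nbij' (fun x => x.1 1)
    (fun j => (e 0 j j, e k (p - j) (q - j))) ?_ ?_ ?_ ?_ ?_
  · rintro ⟨a, b⟩ hx
    simp only [Finset.mem_filter, Finset.HasAntidiagonal.mem_antidiagonal] at hx
    obtain ⟨hab, h0, h12⟩ := hx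
    have h1 := congrArg (fun f : Fin 3 →₀ ℕ => f 1) hab
    have h2 := congrArg (fun f : Fin 3 →₀ ℕ => f 2) hab
    simp only [Finsupp.add_apply, e_apply1, e_apply2] at h1 h2
    simp only [Finset.mem_range]
    omega
  · intro j hj
    simp only [Finset.mem_range] at hj
    simp only [Finset.mem_filter, Finset.HasAntidiagonal.mem_antidiagonal]
    refine ⟨?_, by simp [e_apply0], by simp [e_apply1, e_apply2]⟩
    ext i
    fin_cases i <;> (simp [e, Finsupp.single_apply]; try omega)
  · rintro ⟨a, b⟩ hx
    simp only [Finset.mem_filter, Finset.HasAntidiagonal.mem_antidiagonal] at hx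
    obtain ⟨hab, h0, h12⟩ := hx
    have h1 := congrArg (fun f : Fin 3 →₀ ℕ => f 1) hab
    have h2 := congrArg (fun f : Fin 3 →₀ ℕ => f 2) hab
    have h0' := congrArg (fun f : Fin 3 →₀ ℕ => f 0) hab
    simp only [Finsupp.add_apply, e_apply0, e_apply1, e_apply2] at h1 h2 h0'
    have ha : a = e 0 (a 1) (a 1) := by
      conv_lhs => rw [eq_e a]
      rw [e_eq_e]; omega
    have hb : b = e k (p - a 1) (q - a 1) := by
      conv_lhs => rw [eq_e b]
      rw [e_eq_e]; omega
    simp only [Prod.mk.injEq]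
    exact ⟨ha.symm, hb.symm⟩
  · intro j hj
    simp [e_apply1]
  · rintro ⟨a, b⟩ hx
    simp only [Finset.mem_filter, Finset.HasAntidiagonal.mem_antidiagonal] at hx
    obtain ⟨hab, h0, h12⟩ := hx
    have hb : b = e k (p - a 1) (q - a 1) := by
      have h1 := congrArg (fun f : Fin 3 →₀ ℕ => f 1) hab
      have h2 := congrArg (fun f : Fin 3 →₀ ℕ => f 2) hab
      have h0' := congrArg (fun f : Fin 3 →₀ ℕ => f 0) hab
      simp only [Finsupp.add_apply, e_apply0, e_apply1, e_apply2] at h1 h2 h0'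
      conv_lhs => rw [eq_e b]
      rw [e_eq_e]; omega
    rw [← hb]; rfl

end NFUniq

namespace NFUniq

/-- The product `φ₀^{m₀} φ₁^{m₁} φ₂^{m₂}`. -/
def Pw (φ : Fin 3 → R3) (m : Fin 3 →₀ ℕ) : R3 := ∏ i : Fin 3, φ i ^ (m i)

lemma cf_pb (φ : Fin 3 → R3) (f : R3) (k : Fin 3 →₀ ℕ) :
    cf k (pb φ f) = ∑' m : Fin 3 →₀ ℕ, cf m f * cf k (Pw φ m) := rfl

lemma Pw_add (φ : Fin 3 → R3) (a b : Fin 3 →₀ ℕ) :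
    Pw φ (a + b) = Pw φ a * Pw φ b := by
  simp [Pw, pow_add, Finset.prod_mul_distrib]

lemma Pw_single (φ : Fin 3 → R3) (i : Fin 3) : Pw φ (Finsupp.single i 1) = φ i := by
  fin_cases i <;> simp [Pw, Fin.prod_univ_three, Finsupp.single_apply]

lemma Pw_zero (φ : Fin 3 → R3) : Pw φ 0 = 1 := by simp [Pw]

lemma Pw_e (φ : Fin 3 → R3) (k p q : ℕ) :
    Pw φ (e k p q) = φ 0 ^ k * φ 1 ^ p * φ 2 ^ q := by
  simp [Pw, Fin.prod_univ_three, e_apply0, e_apply1, e_apply2]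

lemma deg_single1 (i : Fin 3) : deg (Finsupp.single i 1) = 1 := by
  fin_cases i <;> simp [deg, Finsupp.single_apply]

lemma apply_le_deg (m : Fin 3 →₀ ℕ) (i : Fin 3) : m i ≤ deg m := by
  fin_cases i
  · show m 0 ≤ deg m; unfold deg; omega
  · show m 1 ≤ deg m; unfold deg; omega
  · show m 2 ≤ deg m; unfold deg; omega

/-- vanishing of low-order coefficients of `Pw φ m`. -/
lemma cf_Pw_eq_zero {φ : Fin 3 → R3}
    (hφ : ∀ i, MvPowerSeries.constantCoeff (φ i) = 0) :
    ∀ (n : ℕ) (m k : Fin 3 →₀ ℕ), deg m = n → deg k < n → cf k (Pw φ m) = 0 := by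
  intro n
  induction n using Nat.strong_induction_on with
  | _ n IH =>
    intro m k hm hk
    have hex : ∃ i, m i ≠ 0 := by
      by_contra hcon
      push_neg at hcon
      have : deg m = 0 := by simp [deg, hcon]
      omega
    obtain ⟨i, hi⟩ := hex
    have hle : Finsupp.single i 1 ≤ m := Finsupp.single_le_iff.2 (by omega)
    have hm' : (m - Finsupp.single i 1) + Finsupp.single i 1 = m :=
      tsub_add_cancel_of_le hle
    have hdeg' : deg (m - Finsupp.single i 1) = n - 1 := by
      have := deg_add hm'
      rw [deg_single1] at this
      omega
    have hPw : Pw φ m = Pw φ (m - Finsupp.single i 1) * φ i := by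
      rw [← Pw_single φ i, ← Pw_add, hm']
    rw [hPw, cf, MvPowerSeries.coeff_mul]
    apply Finset.sum_eq_zero
    rintro ⟨a, b⟩ hab
    rw [Finset.HasAntidiagonal.mem_antidiagonal] at hab
    by_cases hb : b = 0
    · rw [hb]
      rw [MvPowerSeries.coeff_zero_eq_constantCoeff_apply, hφ i, mul_zero]
    · have hdb : 1 ≤ deg b := by
        rcases Nat.eq_zero_or_pos (deg b) with h | h
        · exact absurd (deg_eq_zero h) hb
        · omega
      have hdab : deg a + deg b = deg k := deg_add hab
      have : cf a (Pw φ (m - Finsupp.single i 1)) = 0 := by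
        have hlt : n - 1 < n := by omega
        exact IH (n - 1) hlt _ _ hdeg' (by omega)
      rw [← cf, this, zero_mul]

lemma le_eNNN {m : Fin 3 →₀ ℕ} {N : ℕ} (h : deg m ≤ N) : m ≤ e N N N := by
  rw [Finsupp.le_def]
  intro i
  have h1 := apply_le_deg m i
  have h2 : e N N N i = N := by fin_cases i <;> simp [e, Finsupp.single_apply]
  omega

/-- The basic finite-sum formula for coefficients of a pullback. -/
lemma cf_pb_eq_sum {φ : Fin 3 → R3}
    (hφ : ∀ i, MvPowerSeries.constantCoeff (φ i) = 0)
    (f : R3) (k : Fin 3 →₀ ℕ) (N : ℕ) (hN : deg k ≤ N) :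
    cf k (pb φ f) = ∑ m ∈ Finset.Iic (e N N N), cf m f * cf k (Pw φ m) := by
  rw [cf_pb]
  apply tsum_eq_sum
  intro m hm
  rw [Finset.mem_Iic] at hm
  have : N < deg m := by
    by_contra hcon
    push_neg at hcon
    exact hm (le_eNNN hcon)
  rw [cf_Pw_eq_zero hφ (deg m) m k rfl (by omega), mul_zero]

lemma pb_add (φ : Fin 3 → R3)
    (hφ : ∀ i, MvPowerSeries.constantCoeff (φ i) = 0) (f g : R3) :
    pb φ (f + g) = pb φ f + pb φ g := by
  ext k
  rw [← cf, ← cf, cf_add, cf_pb_eq_sum hφ _ k (deg k) le_rfl,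
    cf_pb_eq_sum hφ f k (deg k) le_rfl, cf_pb_eq_sum hφ g k (deg k) le_rfl,
    ← Finset.sum_add_distrib]
  exact Finset.sum_congr rfl fun m _ => by rw [cf_add, add_mul]

lemma pb_monomial (φ : Fin 3 → R3) (m0 : Fin 3 →₀ ℕ) (a : ℂ) :
    pb φ (MvPowerSeries.monomial m0 a) = a • Pw φ m0 := by
  ext k
  rw [← cf, ← cf, cf_pb]
  rw [tsum_eq_single m0 ?_]
  · simp only [cf]
    rw [MvPowerSeries.coeff_monomial_same, MvPowerSeries.coeff_smul]
  · intro m hm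
    simp only [cf]
    rw [MvPowerSeries.coeff_monomial, if_neg hm, zero_mul]

lemma pb_Xv (φ : Fin 3 → R3) (i : Fin 3) : pb φ (Xv i) = φ i := by
  rw [Xv_eq_monomial, pb_monomial, one_smul, Pw_single]

lemma pb_neg (φ : Fin 3 → R3)
    (hφ : ∀ i, MvPowerSeries.constantCoeff (φ i) = 0) (f : R3) :
    pb φ (-f) = -pb φ f := by
  ext k
  rw [← cf, ← cf, cf_neg, cf_pb_eq_sum hφ _ k (deg k) le_rfl,
    cf_pb_eq_sum hφ f k (deg k) le_rfl, ← Finset.sum_neg_distrib]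
  exact Finset.sum_congr rfl fun m _ => by rw [cf_neg, neg_mul]

/-- Polynomial truncation of a power series. -/
def Pt (N : ℕ) (f : R3) : MvPolynomial (Fin 3) ℂ :=
  ∑ m ∈ Finset.Iic (e N N N), MvPolynomial.monomial m (cf m f)

lemma coeff_Pt (N : ℕ) (f : R3) (m : Fin 3 →₀ ℕ) :
    (Pt N f).coeff m = if m ≤ e N N N then cf m f else 0 := by
  rw [Pt, MvPolynomial.coeff_sum]
  rw [show (∑ n ∈ Finset.Iic (e N N N),
        MvPolynomial.coeff m (MvPolynomial.monomial n (cf n f))) =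
      ∑ n ∈ Finset.Iic (e N N N), (if n = m then cf n f else 0) from
    Finset.sum_congr rfl fun n _ => MvPolynomial.coeff_monomial m n (cf n f)]
  rw [Finset.sum_ite_eq']
  simp [Finset.mem_Iic]

lemma cf_aeval (φ : Fin 3 → R3) (P : MvPolynomial (Fin 3) ℂ)
    (s : Finset (Fin 3 →₀ ℕ)) (hs : P.support ⊆ s) (k : Fin 3 →₀ ℕ) :
    cf k (MvPolynomial.aeval φ P) = ∑ m ∈ s, P.coeff m * cf k (Pw φ m) := by
  have hz : ∀ m ∈ s, m ∉ P.support → P.coeff m * cf k (Pw φ m) = 0 := by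
    intro m _ hm
    rw [MvPolynomial.notMem_support_iff.1 hm, zero_mul]
  rw [← Finset.sum_subset hs hz]
  conv_lhs => rw [P.as_sum]
  rw [map_sum]
  simp only [cf]
  rw [map_sum (MvPowerSeries.coeff k)]
  refine Finset.sum_congr rfl fun m _ => ?_
  rw [MvPolynomial.aeval_monomial, ← Algebra.smul_def]
  rw [MvPowerSeries.coeff_smul]
  congr 1
  rw [Finsupp.prod_pow]
  rfl

lemma cf_aeval_Pt {φ : Fin 3 → R3}
    (hφ : ∀ i, MvPowerSeries.constantCoeff (φ i) = 0)
    (f : R3) (k : Fin 3 →₀ ℕ) (N : ℕ) (hN : deg k ≤ N) :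
    cf k (MvPolynomial.aeval φ (Pt N f)) = cf k (pb φ f) := by
  rw [cf_aeval φ (Pt N f) ((Pt N f).support ∪ Finset.Iic (e N N N))
      Finset.subset_union_left, cf_pb_eq_sum hφ f k N hN]
  have hz : ∀ m ∈ (Pt N f).support ∪ Finset.Iic (e N N N),
      m ∉ Finset.Iic (e N N N) → (Pt N f).coeff m * cf k (Pw φ m) = 0 := by
    intro m _ hm
    rw [coeff_Pt, if_neg (fun hh => hm (Finset.mem_Iic.2 hh)), zero_mul]
  rw [← Finset.sum_subset Finset.subset_union_right hz]
  exact Finset.sum_congr rfl fun m hm => by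
    rw [coeff_Pt, if_pos (Finset.mem_Iic.1 hm)]

lemma cf_aeval_congr {φ : Fin 3 → R3}
    (hφ : ∀ i, MvPowerSeries.constantCoeff (φ i) = 0)
    (P Q : MvPolynomial (Fin 3) ℂ) (N : ℕ)
    (h : ∀ m, deg m ≤ N → P.coeff m = Q.coeff m)
    (k : Fin 3 →₀ ℕ) (hk : deg k ≤ N) :
    cf k (MvPolynomial.aeval φ P) = cf k (MvPolynomial.aeval φ Q) := by
  set s := P.support ∪ Q.support with hs
  rw [cf_aeval φ P s Finset.subset_union_left,
    cf_aeval φ Q s Finset.subset_union_right]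
  refine Finset.sum_congr rfl fun m _ => ?_
  by_cases hm : deg m ≤ N
  · rw [h m hm]
  · rw [cf_Pw_eq_zero hφ (deg m) m k rfl (by omega), mul_zero, mul_zero]

/-- `pb` is multiplicative. -/
lemma pb_mul (φ : Fin 3 → R3)
    (hφ : ∀ i, MvPowerSeries.constantCoeff (φ i) = 0) (f g : R3) :
    pb φ (f * g) = pb φ f * pb φ g := by
  classical
  ext k
  rw [← cf, ← cf]
  set N := deg k with hNdef
  rw [← cf_aeval_Pt hφ (f * g) k N le_rfl]
  rw [cf_aeval_congr hφ (Pt N (f * g)) (Pt N f * Pt N g) N ?congr k le_rfl]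
  case congr =>
    intro m hm
    rw [coeff_Pt, if_pos (le_eNNN hm), MvPolynomial.coeff_mul, cf,
      MvPowerSeries.coeff_mul]
    refine Finset.sum_congr rfl fun x hx => ?_
    rw [Finset.HasAntidiagonal.mem_antidiagonal] at hx
    have hx1 : x.1 ≤ e N N N := by
      refine le_eNNN (le_trans ?_ hm)
      have := deg_add hx
      omega
    have hx2 : x.2 ≤ e N N N := by
      refine le_eNNN (le_trans ?_ hm)
      have := deg_add hx
      omega
    rw [coeff_Pt, coeff_Pt, if_pos hx1, if_pos hx2]
    rfl
  rw [map_mul]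
  simp only [cf]
  rw [MvPowerSeries.coeff_mul, MvPowerSeries.coeff_mul]
  refine Finset.sum_congr rfl fun x hx => ?_
  rw [Finset.HasAntidiagonal.mem_antidiagonal] at hx
  have hd : deg x.1 + deg x.2 = N := deg_add hx
  rw [← cf, ← cf, ← cf, ← cf,
    cf_aeval_Pt hφ f x.1 N (by omega), cf_aeval_Pt hφ g x.2 N (by omega)]

end NFUniq

namespace NFUniq

lemma e_add_single0 (k p q n : ℕ) : e k p q + Finsupp.single 0 n = e (k+n) p q := by
  ext i; fin_cases i <;> simp [e, Finsupp.single_apply]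

lemma e_add_single1 (k p q n : ℕ) : e k p q + Finsupp.single 1 n = e k (p+n) q := by
  ext i; fin_cases i <;> simp [e, Finsupp.single_apply]

lemma e_add_single2 (k p q n : ℕ) : e k p q + Finsupp.single 2 n = e k p (q+n) := by
  ext i; fin_cases i <;> simp [e, Finsupp.single_apply]

lemma e_sub_single0 (k p q n : ℕ) : e k p q - Finsupp.single 0 n = e (k-n) p q := by
  ext i; fin_cases i <;> simp [e, Finsupp.single_apply, Finsupp.tsub_apply]

lemma e_sub_single1 (k p q n : ℕ) : e k p q - Finsupp.single 1 n = e k (p-n) q := by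
  ext i; fin_cases i <;> simp [e, Finsupp.single_apply, Finsupp.tsub_apply]

lemma e_sub_single2 (k p q n : ℕ) : e k p q - Finsupp.single 2 n = e k p (q-n) := by
  ext i; fin_cases i <;> simp [e, Finsupp.single_apply, Finsupp.tsub_apply]

lemma cf_X1_pd1 (k p q : ℕ) (f : R3) :
    cf (e k p q) (Xv 1 * pd 1 f) = (p : ℂ) * cf (e k p q) f := by
  rw [cf_X_mul, e_apply1]
  by_cases hp : p = 0
  · simp [hp]
  · rw [if_neg hp, e_sub_single1, cf_pd, e_apply1, e_add_single1]
    have h1 : p - 1 + 1 = p := by omega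
    have h2 : ((p - 1 : ℕ) : ℂ) + 1 = (p : ℂ) := by
      rw [Nat.cast_sub (by omega)]; ring
    rw [h1, h2]

lemma cf_X2_pd2 (k p q : ℕ) (f : R3) :
    cf (e k p q) (Xv 2 * pd 2 f) = (q : ℂ) * cf (e k p q) f := by
  rw [cf_X_mul, e_apply2]
  by_cases hq : q = 0
  · simp [hq]
  · rw [if_neg hq, e_sub_single2, cf_pd, e_apply2, e_add_single2]
    have h1 : q - 1 + 1 = q := by omega
    have h2 : ((q - 1 : ℕ) : ℂ) + 1 = (q : ℂ) := by
      rw [Nat.cast_sub (by omega)]; ring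
    rw [h1, h2]

lemma cf_X0_mul_e (k p q : ℕ) (w : R3) :
    cf (e k p q) (Xv 0 * w) = if k = 0 then 0 else cf (e (k-1) p q) w := by
  rw [cf_X_mul, e_apply0, e_sub_single0]

lemma cf_X0sq_pd0 (k p q : ℕ) (f : R3) :
    cf (e k p q) (Xv 0 ^ 2 * pd 0 f) =
      if k = 0 then 0 else ((k : ℂ) - 1) * cf (e (k-1) p q) f := by
  rw [cf_X0sq_mul, e_apply0]
  match k with
  | 0 => rw [if_neg (by omega), if_pos rfl]
  | 1 =>
    rw [if_neg (by omega), if_neg (by omega)]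
    norm_num
  | (n+2) =>
    rw [if_pos (by omega), if_neg (by omega), e_sub_single0, cf_pd, e_apply0,
      e_add_single0]
    have h1 : n + 2 - 2 + 1 = n + 2 - 1 := by omega
    rw [h1]
    push_cast
    ring

/-- Coefficient of a product with a normal-form component factor. -/
lemma cf_NFcomp_mul (b a : ℂ) (c : PowerSeries ℂ) (w : R3) (k p q : ℕ) :
    cf (e k p q) ((Cc b + Cc a * Xv 0 + csub c) * w) =
      b * cf (e k p q) w + (if k = 0 then 0 else a * cf (e (k-1) p q) w)
        + ∑ j ∈ Finset.range (min p q + 1),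
            PowerSeries.coeff j c * cf (e k (p-j) (q-j)) w := by
  have hx : (Cc b + Cc a * Xv 0 + csub c) * w
      = Cc b * w + Cc a * (Xv 0 * w) + csub c * w := by ring
  rw [hx, cf_add, cf_add, cf_C_mul, cf_C_mul, cf_X0_mul_e, cf_csub_mul]
  by_cases hk : k = 0 <;> simp [hk]

/-- Master coefficient formula for the normal-form vector field applied to `f`. -/
lemma cf_VF_NF (l a₁ a₂ : ℂ) (c₁ c₂ : PowerSeries ℂ) (f : R3) (k p q : ℕ) :
    cf (e k p q) (VF (NF l a₁ a₂ c₁ c₂) f) =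
      (if k = 0 then 0 else (((k : ℂ) - 1) + a₁ * p + a₂ * q) * cf (e (k-1) p q) f)
      + l * ((q : ℂ) - (p : ℂ)) * cf (e k p q) f
      + ∑ j ∈ Finset.range (min p q + 1),
          (PowerSeries.coeff j c₁ * ((p - j : ℕ) : ℂ)
            + PowerSeries.coeff j c₂ * ((q - j : ℕ) : ℂ)) * cf (e k (p-j) (q-j)) f := by
  rw [VF, Fin.sum_univ_three]
  have h0 : NF l a₁ a₂ c₁ c₂ 0 = Xv 0 ^ 2 := rfl
  have h1 : NF l a₁ a₂ c₁ c₂ 1 = (Cc (-l) + Cc a₁ * Xv 0 + csub c₁) * Xv 1 := rfl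
  have h2 : NF l a₁ a₂ c₁ c₂ 2 = (Cc l + Cc a₂ * Xv 0 + csub c₂) * Xv 2 := rfl
  rw [h0, h1, h2]
  have e1 : (Cc (-l) + Cc a₁ * Xv 0 + csub c₁) * Xv 1 * pd 1 f
      = (Cc (-l) + Cc a₁ * Xv 0 + csub c₁) * (Xv 1 * pd 1 f) := by ring
  have e2 : (Cc l + Cc a₂ * Xv 0 + csub c₂) * Xv 2 * pd 2 f
      = (Cc l + Cc a₂ * Xv 0 + csub c₂) * (Xv 2 * pd 2 f) := by ring
  rw [e1, e2, cf_add, cf_add, cf_X0sq_pd0, cf_NFcomp_mul, cf_NFcomp_mul,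
    cf_X1_pd1, cf_X2_pd2]
  simp only [cf_X1_pd1, cf_X2_pd2]
  have hsplit : ∑ j ∈ Finset.range (min p q + 1),
      (PowerSeries.coeff j c₁ * ((p - j : ℕ) : ℂ)
        + PowerSeries.coeff j c₂ * ((q - j : ℕ) : ℂ)) * cf (e k (p-j) (q-j)) f
      = (∑ j ∈ Finset.range (min p q + 1),
          PowerSeries.coeff j c₁ * (((p - j : ℕ) : ℂ) * cf (e k (p-j) (q-j)) f))
        + ∑ j ∈ Finset.range (min p q + 1),
            PowerSeries.coeff j c₂ * (((q - j : ℕ) : ℂ) * cf (e k (p-j) (q-j)) f) := by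
    rw [← Finset.sum_add_distrib]
    exact Finset.sum_congr rfl fun j _ => by ring
  rw [hsplit]
  by_cases hk : k = 0
  · simp only [hk, if_pos rfl, reduceIte]
    ring
  · simp only [if_neg hk]
    ring

end NFUniq

namespace NFUniq

lemma cf_mul (m : Fin 3 →₀ ℕ) (f g : R3) :
    cf m (f * g) = ∑ x ∈ Finset.HasAntidiagonal.antidiagonal m, cf x.1 f * cf x.2 g := by
  simp only [cf]
  exact MvPowerSeries.coeff_mul m f g

lemma cf_one (m : Fin 3 →₀ ℕ) : cf m (1 : R3) = if m = 0 then 1 else 0 := by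
  simp only [cf]
  exact MvPowerSeries.coeff_one m

lemma cf_zero (m : Fin 3 →₀ ℕ) : cf m (0 : R3) = 0 :=
  map_zero (MvPowerSeries.coeff m)

/-- extensionality with exponent triples -/
lemma R3_ext {f g : R3} (h : ∀ k p q, cf (e k p q) f = cf (e k p q) g) : f = g := by
  ext m
  have := h (m 0) (m 1) (m 2)
  rw [← eq_e m] at this
  exact this

/-- Leibniz rule for the formal partial derivative. -/
lemma pd_mul (i : Fin 3) (F G : R3) :
    pd i (F * G) = pd i F * G + F * pd i G := by
  set s : Fin 3 →₀ ℕ := Finsupp.single i 1 with hs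
  ext m
  rw [← cf, ← cf, cf_add, cf_pd, cf_mul, cf_mul, cf_mul]
  simp only [cf_pd]
  have key1 : ∀ y : (Fin 3 →₀ ℕ) × (Fin 3 →₀ ℕ),
      ((y.1 i : ℂ)) * (cf y.1 F * cf y.2 G) ≠ 0 → y.1 i ≠ 0 := by
    intro y hne h0
    rw [h0] at hne
    simp at hne
  have key2 : ∀ y : (Fin 3 →₀ ℕ) × (Fin 3 →₀ ℕ),
      ((y.2 i : ℂ)) * (cf y.1 F * cf y.2 G) ≠ 0 → y.2 i ≠ 0 := by
    intro y hne h0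
    rw [h0] at hne
    simp at hne
  have h1 : ∑ x ∈ Finset.HasAntidiagonal.antidiagonal m,
        (((x.1 i : ℂ) + 1) * cf (x.1 + s) F) * cf x.2 G
      = ∑ y ∈ Finset.HasAntidiagonal.antidiagonal (m + s), (y.1 i : ℂ) * (cf y.1 F * cf y.2 G) := by
    rw [← Finset.sum_filter_of_ne (s := Finset.HasAntidiagonal.antidiagonal (m + s))
      (p := fun y : (Fin 3 →₀ ℕ) × (Fin 3 →₀ ℕ) => y.1 i ≠ 0)
      (f := fun y : (Fin 3 →₀ ℕ) × (Fin 3 →₀ ℕ) =>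
        (y.1 i : ℂ) * (cf y.1 F * cf y.2 G)) (fun y _ => key1 y)]
    refine Finset.sum_nbij' (fun x => (x.1 + s, x.2)) (fun y => (y.1 - s, y.2))
      ?_ ?_ ?_ ?_ ?_
    · rintro ⟨a, b⟩ hx
      rw [Finset.HasAntidiagonal.mem_antidiagonal] at hx
      show (a + s, b) ∈ Finset.filter _ _
      rw [Finset.mem_filter, Finset.HasAntidiagonal.mem_antidiagonal]
      constructor
      · show a + s + b = m + s
        rw [add_right_comm, hx]
      · show (a + s) i ≠ 0
        simp [hs, Finsupp.add_apply, Finsupp.single_apply]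
    · rintro ⟨a, b⟩ hy
      rw [Finset.mem_filter, Finset.HasAntidiagonal.mem_antidiagonal] at hy
      show (a - s, b) ∈ Finset.HasAntidiagonal.antidiagonal m
      rw [Finset.HasAntidiagonal.mem_antidiagonal]
      have hai : a i ≠ 0 := hy.2
      have hle : s ≤ a := by
        rw [hs, Finsupp.single_le_iff]
        omega
      have hca : a - s + s = a := tsub_add_cancel_of_le hle
      apply add_right_cancel (b := s)
      show a - s + b + s = m + s
      rw [add_right_comm, hca, hy.1]
    · rintro ⟨a, b⟩ _
      show (a + s - s, b) = (a, b)
      rw [add_tsub_cancel_right]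
    · rintro ⟨a, b⟩ hy
      rw [Finset.mem_filter, Finset.HasAntidiagonal.mem_antidiagonal] at hy
      have hai : a i ≠ 0 := hy.2
      have hle : s ≤ a := by
        rw [hs, Finsupp.single_le_iff]
        omega
      show (a - s + s, b) = (a, b)
      rw [tsub_add_cancel_of_le hle]
    · rintro ⟨a, b⟩ _
      show ((a i : ℂ) + 1) * cf (a + s) F * cf b G
        = ((a + s) i : ℂ) * (cf (a + s) F * cf b G)
      have : (a + s) i = a i + 1 := by
        simp [hs, Finsupp.add_apply, Finsupp.single_apply]
      rw [this]
      push_cast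
      ring
  have h2 : ∑ x ∈ Finset.HasAntidiagonal.antidiagonal m,
        cf x.1 F * (((x.2 i : ℂ) + 1) * cf (x.2 + s) G)
      = ∑ y ∈ Finset.HasAntidiagonal.antidiagonal (m + s), (y.2 i : ℂ) * (cf y.1 F * cf y.2 G) := by
    rw [← Finset.sum_filter_of_ne (s := Finset.HasAntidiagonal.antidiagonal (m + s))
      (p := fun y : (Fin 3 →₀ ℕ) × (Fin 3 →₀ ℕ) => y.2 i ≠ 0)
      (f := fun y : (Fin 3 →₀ ℕ) × (Fin 3 →₀ ℕ) =>
        (y.2 i : ℂ) * (cf y.1 F * cf y.2 G)) (fun y _ => key2 y)]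
    refine Finset.sum_nbij' (fun x => (x.1, x.2 + s)) (fun y => (y.1, y.2 - s))
      ?_ ?_ ?_ ?_ ?_
    · rintro ⟨a, b⟩ hx
      rw [Finset.HasAntidiagonal.mem_antidiagonal] at hx
      show (a, b + s) ∈ Finset.filter _ _
      rw [Finset.mem_filter, Finset.HasAntidiagonal.mem_antidiagonal]
      constructor
      · show a + (b + s) = m + s
        rw [← add_assoc, hx]
      · show (b + s) i ≠ 0
        simp [hs, Finsupp.add_apply, Finsupp.single_apply]
    · rintro ⟨a, b⟩ hy
      rw [Finset.mem_filter, Finset.HasAntidiagonal.mem_antidiagonal] at hy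
      show (a, b - s) ∈ Finset.HasAntidiagonal.antidiagonal m
      rw [Finset.HasAntidiagonal.mem_antidiagonal]
      have hbi : b i ≠ 0 := hy.2
      have hle : s ≤ b := by
        rw [hs, Finsupp.single_le_iff]
        omega
      have hcb : b - s + s = b := tsub_add_cancel_of_le hle
      apply add_right_cancel (b := s)
      show a + (b - s) + s = m + s
      rw [add_assoc, hcb, hy.1]
    · rintro ⟨a, b⟩ _
      show (a, b + s - s) = (a, b)
      rw [add_tsub_cancel_right]
    · rintro ⟨a, b⟩ hy
      rw [Finset.mem_filter, Finset.HasAntidiagonal.mem_antidiagonal] at hy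
      have hbi : b i ≠ 0 := hy.2
      have hle : s ≤ b := by
        rw [hs, Finsupp.single_le_iff]
        omega
      show (a, b - s + s) = (a, b)
      rw [tsub_add_cancel_of_le hle]
    · rintro ⟨a, b⟩ _
      show cf a F * (((b i : ℂ) + 1) * cf (b + s) G)
        = ((b + s) i : ℂ) * (cf a F * cf (b + s) G)
      have : (b + s) i = b i + 1 := by
        simp [hs, Finsupp.add_apply, Finsupp.single_apply]
      rw [this]
      push_cast
      ring
  rw [h1, h2, ← Finset.sum_add_distrib, Finset.mul_sum]
  refine Finset.sum_congr rfl fun y hy => ?_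
  rw [Finset.HasAntidiagonal.mem_antidiagonal] at hy
  have hyi : y.1 i + y.2 i = m i + 1 := by
    have := congrArg (fun z : Fin 3 →₀ ℕ => z i) hy
    simpa [hs, Finsupp.add_apply, Finsupp.single_apply] using this
  have hcast : (y.1 i : ℂ) + (y.2 i : ℂ) = (m i : ℂ) + 1 := by
    exact_mod_cast congrArg (fun n : ℕ => (n : ℂ)) hyi
  rw [← hcast]
  ring

lemma single0_e (n : ℕ) : Finsupp.single (0 : Fin 3) n = e n 0 0 := by
  ext i; fin_cases i <;> simp [e, Finsupp.single_apply]

lemma single1_e (n : ℕ) : Finsupp.single (1 : Fin 3) n = e 0 n 0 := by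
  ext i; fin_cases i <;> simp [e, Finsupp.single_apply]

lemma single2_e (n : ℕ) : Finsupp.single (2 : Fin 3) n = e 0 0 n := by
  ext i; fin_cases i <;> simp [e, Finsupp.single_apply]

lemma e_add_e (k p q k' p' q' : ℕ) :
    e k p q + e k' p' q' = e (k + k') (p + p') (q + q') := by
  ext i; fin_cases i <;> simp [e, Finsupp.single_apply]

lemma Xv0_eq : Xv 0 = MvPowerSeries.monomial (e 1 0 0) 1 := by
  rw [Xv_eq_monomial, single0_e]

lemma Xv1_eq : Xv 1 = MvPowerSeries.monomial (e 0 1 0) 1 := by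
  rw [Xv_eq_monomial, single1_e]

lemma Xv2_eq : Xv 2 = MvPowerSeries.monomial (e 0 0 1) 1 := by
  rw [Xv_eq_monomial, single2_e]

lemma X1X2_eq : Xv 1 * Xv 2 = MvPowerSeries.monomial (e 0 1 1) 1 := by
  rw [Xv1_eq, Xv2_eq, MvPowerSeries.monomial_mul_monomial, one_mul, e_add_e]

lemma X0X1X2_eq : Xv 0 * (Xv 1 * Xv 2) = MvPowerSeries.monomial (e 1 1 1) 1 := by
  rw [Xv0_eq, X1X2_eq, MvPowerSeries.monomial_mul_monomial, one_mul, e_add_e]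

lemma cf_monomial (m n : Fin 3 →₀ ℕ) (a : ℂ) :
    cf m (MvPowerSeries.monomial n a) = if m = n then a else 0 :=
  MvPowerSeries.coeff_monomial m n a

lemma pd0_X1X2 : pd 0 (Xv 1 * Xv 2) = 0 := by
  refine R3_ext fun k p q => ?_
  rw [X1X2_eq, cf_pd, e_apply0, e_add_single0, cf_monomial, cf_zero]
  rw [if_neg (fun h => by have := (e_eq_e.1 h).1; omega), mul_zero]

lemma pd1_X1X2 : pd 1 (Xv 1 * Xv 2) = Xv 2 := by
  refine R3_ext fun k p q => ?_
  rw [X1X2_eq, Xv2_eq, cf_pd, e_apply1, e_add_single1, cf_monomial, cf_monomial]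
  by_cases h : k = 0 ∧ p = 0 ∧ q = 1
  · rw [if_pos (e_eq_e.2 ⟨h.1, by omega, h.2.2⟩), if_pos (e_eq_e.2 ⟨h.1, h.2.1, h.2.2⟩),
      h.2.1]
    norm_num
  · rw [if_neg (fun hh => h (by have := e_eq_e.1 hh; exact ⟨this.1, by omega, this.2.2⟩)),
      if_neg (fun hh => h (e_eq_e.1 hh)), mul_zero]

lemma pd2_X1X2 : pd 2 (Xv 1 * Xv 2) = Xv 1 := by
  refine R3_ext fun k p q => ?_
  rw [X1X2_eq, Xv1_eq, cf_pd, e_apply2, e_add_single2, cf_monomial, cf_monomial]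
  by_cases h : k = 0 ∧ p = 1 ∧ q = 0
  · rw [if_pos (e_eq_e.2 ⟨h.1, h.2.1, by omega⟩), if_pos (e_eq_e.2 ⟨h.1, h.2.1, h.2.2⟩),
      h.2.2]
    norm_num
  · rw [if_neg (fun hh => h (by have := e_eq_e.1 hh; exact ⟨this.1, this.2.1, by omega⟩)),
      if_neg (fun hh => h (e_eq_e.1 hh)), mul_zero]

lemma zero_eq_e : (0 : Fin 3 →₀ ℕ) = e 0 0 0 := e_zero.symm

lemma pd0_X1 : pd 0 (Xv 1) = 0 := by
  refine R3_ext fun k p q => ?_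
  rw [Xv1_eq, cf_pd, e_apply0, e_add_single0, cf_monomial, cf_zero]
  rw [if_neg (fun h => by have := (e_eq_e.1 h).1; omega), mul_zero]

lemma pd2_X1 : pd 2 (Xv 1) = 0 := by
  refine R3_ext fun k p q => ?_
  rw [Xv1_eq, cf_pd, e_apply2, e_add_single2, cf_monomial, cf_zero]
  rw [if_neg (fun h => by have := (e_eq_e.1 h).2.2; omega), mul_zero]

lemma pd1_X1 : pd 1 (Xv 1) = 1 := by
  refine R3_ext fun k p q => ?_
  rw [Xv1_eq, cf_pd, e_apply1, e_add_single1, cf_monomial, cf_one]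
  rw [zero_eq_e]
  by_cases h : k = 0 ∧ p = 0 ∧ q = 0
  · rw [if_pos (e_eq_e.2 ⟨h.1, by omega, h.2.2⟩), if_pos (e_eq_e.2 h), h.2.1]
    norm_num
  · rw [if_neg (fun hh => h (by have := e_eq_e.1 hh; exact ⟨this.1, by omega, this.2.2⟩)),
      if_neg (fun hh => h (e_eq_e.1 hh)), mul_zero]

lemma NF_0 (l a1 a2 : ℂ) (c1 c2 : PowerSeries ℂ) : NF l a1 a2 c1 c2 0 = Xv 0 ^ 2 := rfl

lemma NF_1 (l a1 a2 : ℂ) (c1 c2 : PowerSeries ℂ) :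
    NF l a1 a2 c1 c2 1 = (Cc (-l) + Cc a1 * Xv 0 + csub c1) * Xv 1 := by
  simp [NF]

lemma NF_2 (l a1 a2 : ℂ) (c1 c2 : PowerSeries ℂ) :
    NF l a1 a2 c1 c2 2 = (Cc l + Cc a2 * Xv 0 + csub c2) * Xv 2 := by
  simp [NF]

lemma Cc_neg (a : ℂ) : Cc (-a) = -Cc a := by
  rw [Cc, Cc, map_neg]

lemma Cc_add_eq_one {a b : ℂ} (h : a + b = 1) : Cc a + Cc b = 1 := by
  rw [Cc, Cc, ← map_add, h, map_one]

/-- The target vector field applied to `y₁y₂`. -/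
lemma VF_NF_X1X2 (l a1 a2 : ℂ) (d : PowerSeries ℂ) (hab : a1 + a2 = 1) :
    VF (NF l a1 a2 (-d) d) (Xv 1 * Xv 2) = Xv 0 * (Xv 1 * Xv 2) := by
  rw [VF, Fin.sum_univ_three]
  rw [NF_0, NF_1, NF_2]
  rw [pd0_X1X2, pd1_X1X2, pd2_X1X2, mul_zero, csub_neg, Cc_neg]
  have h1 : Cc a1 + Cc a2 = 1 := Cc_add_eq_one hab
  linear_combination (Xv 0 * (Xv 1 * Xv 2)) * h1

/-- The target vector field applied to `y₁`. -/
lemma VF_NF_X1 (l a1 a2 : ℂ) (c1 c2 : PowerSeries ℂ) :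
    VF (NF l a1 a2 c1 c2) (Xv 1) = (Cc (-l) + Cc a1 * Xv 0 + csub c1) * Xv 1 := by
  rw [VF, Fin.sum_univ_three]
  rw [NF_0, NF_1, NF_2]
  rw [pd0_X1, pd1_X1, pd2_X1, mul_zero, mul_one, mul_zero, zero_add, add_zero]

end NFUniq

namespace NFUniq

lemma cf_smul (m : Fin 3 →₀ ℕ) (a : ℂ) (f : R3) : cf m (a • f) = a * cf m f := by
  simp only [cf]
  exact MvPowerSeries.coeff_smul f m a

lemma cf0_cc (f : R3) : cf 0 f = MvPowerSeries.constantCoeff f := by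
  simp only [cf]
  exact MvPowerSeries.coeff_zero_eq_constantCoeff_apply f

lemma pd_add (i : Fin 3) (f g : R3) : pd i (f + g) = pd i f + pd i g := by
  ext m
  rw [← cf, ← cf, cf_add, cf_pd, cf_pd, cf_pd, cf_add]
  ring

lemma cc_pd (i : Fin 3) (f : R3) :
    MvPowerSeries.constantCoeff (pd i f) = cf (Finsupp.single i 1) f := by
  rw [← cf0_cc, cf_pd]
  simp

lemma cc_pd1_pd2 (f : R3) :
    MvPowerSeries.constantCoeff (pd 1 (pd 2 f)) = cf (e 0 1 1) f := by
  rw [cc_pd, single1_e, cf_pd, e_apply2, e_add_single2]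
  norm_num

/-- coefficient of `y₁y₂` in a product. -/
lemma cf011_mul (F G : R3) :
    cf (e 0 1 1) (F * G) =
      cf (e 0 1 1) F * cf 0 G + cf (e 0 1 0) F * cf (e 0 0 1) G
        + cf (e 0 0 1) F * cf (e 0 1 0) G + cf 0 F * cf (e 0 1 1) G := by
  rw [← cc_pd1_pd2, pd_mul, pd_add, pd_mul, pd_mul]
  rw [map_add, map_add, map_add, map_mul, map_mul, map_mul, map_mul]
  rw [cc_pd1_pd2, cc_pd1_pd2, cc_pd, cc_pd, cc_pd, cc_pd]
  rw [single1_e, single2_e, ← cf0_cc, ← cf0_cc]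
  ring

lemma cf_e100_mul (F G : R3)
    (hF : MvPowerSeries.constantCoeff F = 0)
    (hG : MvPowerSeries.constantCoeff G = 0) :
    cf (e 1 0 0) (F * G) = 0 := by
  rw [cf_mul]
  apply Finset.sum_eq_zero
  rintro ⟨a, b⟩ hab
  rw [Finset.HasAntidiagonal.mem_antidiagonal] at hab
  have h0 := congrArg (fun z : Fin 3 →₀ ℕ => z 0) hab
  have h1 := congrArg (fun z : Fin 3 →₀ ℕ => z 1) hab
  have h2 := congrArg (fun z : Fin 3 →₀ ℕ => z 2) hab
  simp only [Finsupp.add_apply, e_apply0, e_apply1, e_apply2] at h0 h1 h2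
  by_cases ha : a 0 = 0
  · have : a = 0 := by
      ext i
      fin_cases i
      · exact ha
      · show a 1 = 0; omega
      · show a 2 = 0; omega
    rw [this]
    show cf 0 F * cf b G = 0
    rw [cf0_cc, hF, zero_mul]
  · have : b = 0 := by
      ext i
      fin_cases i
      · show b 0 = 0; omega
      · show b 1 = 0; omega
      · show b 2 = 0; omega
    rw [this]
    show cf a F * cf 0 G = 0
    rw [cf0_cc, hG, mul_zero]

lemma pb_Cc (φ : Fin 3 → R3) (a : ℂ) : pb φ (Cc a) = Cc a := by
  have hCm : Cc a = MvPowerSeries.monomial 0 a := by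
    refine R3_ext fun k p q => ?_
    rw [cf_monomial]
    simp only [cf, Cc]
    rw [MvPowerSeries.coeff_C]
  rw [hCm, pb_monomial, Pw_zero]
  refine R3_ext fun k p q => ?_
  rw [cf_smul, cf_one, cf_monomial]
  split <;> simp

lemma X1X2_pow (j : ℕ) :
    (Xv 1 * Xv 2) ^ j = MvPowerSeries.monomial (e 0 j j) 1 := by
  rw [mul_pow, Xv, Xv, MvPowerSeries.X_pow_eq, MvPowerSeries.X_pow_eq,
    MvPowerSeries.monomial_mul_monomial, one_mul, single1_e, single2_e, e_add_e]
  norm_num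

end NFUniq

open NFUniq

/-- **Uniqueness of the transversally Hamiltonian normal form** with respect to the action
of transversally symplectic formal diffeomorphisms. -/
theorem trans_hamiltonian_normal_form_unique
    (l a₁ a₂ a₁' a₂' : ℂ) (hl : l ≠ 0) (hsum : a₁ + a₂ = 1) (hsum' : a₁' + a₂' = 1)
    (c c' : PowerSeries ℂ)
    (hc : PowerSeries.constantCoeff c = 0) (hc' : PowerSeries.constantCoeff c' = 0)
    (φ : Fin 3 → R3) (hd : IsDiffeo φ) (hs : TransSymp φ)
    (hconj : Conj φ (NF l a₁ a₂ (-c) c) (NF l a₁' a₂' (-c') c')) :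
    a₁ = a₁' ∧ a₂ = a₂' ∧ c = c' := by
  classical
  obtain ⟨hφ0, -⟩ := hd
  obtain ⟨hfib, hsymp0⟩ := hs
  have h0c : PowerSeries.coeff 0 c = 0 := by
    rw [PowerSeries.coeff_zero_eq_constantCoeff]; exact hc
  have h0c' : PowerSeries.coeff 0 c' = 0 := by
    rw [PowerSeries.coeff_zero_eq_constantCoeff]; exact hc'
  -- Step A: the product v = φ₁φ₂ satisfies Y(v) = x v
  have hEv : VF (NF l a₁ a₂ (-c) c) (φ 1 * φ 2) = Xv 0 * (φ 1 * φ 2) := by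
    have h := hconj (Xv 1 * Xv 2)
    rw [VF_NF_X1X2 _ _ _ _ hsum', X0X1X2_eq, X1X2_eq, pb_monomial, pb_monomial,
      one_smul, one_smul, Pw_e, Pw_e, hfib] at h
    simp only [pow_one, pow_zero, one_mul] at h
    rw [mul_assoc] at h
    exact h.symm
  -- coefficient identity for v
  have Sv : ∀ k p q : ℕ,
      (if k = 0 then 0 else (((k:ℂ)-1) + a₁*p + a₂*q) * cf (e (k-1) p q) (φ 1 * φ 2))
      + l * ((q:ℂ) - (p:ℂ)) * cf (e k p q) (φ 1 * φ 2)
      + (∑ j ∈ Finset.range (min p q + 1),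
          (PowerSeries.coeff j (-c) * ((p - j : ℕ):ℂ)
            + PowerSeries.coeff j c * ((q - j : ℕ):ℂ)) * cf (e k (p-j) (q-j)) (φ 1 * φ 2))
      = if k = 0 then 0 else cf (e (k-1) p q) (φ 1 * φ 2) := by
    intro k p q
    have h := congrArg (cf (e k p q)) hEv
    rw [cf_VF_NF, cf_X0_mul_e] at h
    exact h
  -- weight-zero property of v
  have hw : ∀ n, ∀ k p q : ℕ, k + p + q ≤ n → p ≠ q → cf (e k p q) (φ 1 * φ 2) = 0 := by
    intro n
    induction n with
    | zero => intro k p q hle hpq; omega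
    | succ n IH =>
      intro k p q hle hpq
      by_cases hle' : k + p + q ≤ n
      · exact IH k p q hle' hpq
      have hv := Sv k p q
      have hif : (if k = 0 then 0 else (((k:ℂ)-1) + a₁*p + a₂*q) * cf (e (k-1) p q) (φ 1 * φ 2)) = 0 := by
        by_cases hk : k = 0
        · rw [if_pos hk]
        · rw [if_neg hk, IH (k-1) p q (by omega) hpq, mul_zero]
      have hif2 : (if k = 0 then (0:ℂ) else cf (e (k-1) p q) (φ 1 * φ 2)) = 0 := by
        by_cases hk : k = 0
        · rw [if_pos hk]
        · rw [if_neg hk, IH (k-1) p q (by omega) hpq]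
      have hsz : (∑ j ∈ Finset.range (min p q + 1),
          (PowerSeries.coeff j (-c) * ((p - j : ℕ):ℂ)
            + PowerSeries.coeff j c * ((q - j : ℕ):ℂ)) * cf (e k (p-j) (q-j)) (φ 1 * φ 2)) = 0 := by
        apply Finset.sum_eq_zero
        intro j hj
        rw [Finset.mem_range] at hj
        by_cases hj0 : j = 0
        · subst hj0
          rw [map_neg, h0c]
          norm_num
        · rw [IH k (p-j) (q-j) (by omega) (by omega), mul_zero]
      rw [hif, hsz, hif2, zero_add, add_zero] at hv
      have hqp : (q:ℂ) - (p:ℂ) ≠ 0 := by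
        rw [sub_ne_zero]
        exact_mod_cast Ne.symm hpq
      exact (mul_eq_zero.1 hv).resolve_left (mul_ne_zero hl hqp)
  -- concentration of v
  have hvconc : ∀ k p q : ℕ, ¬(k = 0 ∧ p = 1 ∧ q = 1) → cf (e k p q) (φ 1 * φ 2) = 0 := by
    intro k p q hno
    by_cases hpq : p = q
    · subst hpq
      by_cases h10 : k = 1 ∧ p = 0
      · obtain ⟨rfl, rfl⟩ := h10
        exact cf_e100_mul _ _ (hφ0 1) (hφ0 2)
      · have hv := Sv (k+1) p p
        have hsz : (∑ j ∈ Finset.range (min p p + 1),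
            (PowerSeries.coeff j (-c) * ((p - j : ℕ):ℂ)
              + PowerSeries.coeff j c * ((p - j : ℕ):ℂ)) * cf (e (k+1) (p-j) (p-j)) (φ 1 * φ 2)) = 0 := by
          apply Finset.sum_eq_zero
          intro j hj
          rw [map_neg]
          ring
        rw [hsz, if_neg (by omega : ¬ (k+1 = 0)), if_neg (by omega : ¬ (k+1 = 0)),
          sub_self, mul_zero, zero_mul, add_zero, add_zero, Nat.add_sub_cancel] at hv
        have hkp : k + p ≠ 1 := by
          intro h1
          rcases Nat.lt_or_ge k 1 with hk | hk
          · exact hno ⟨by omega, by omega, by omega⟩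
          · exact h10 ⟨by omega, by omega⟩
        have hcoef : ((((k+1:ℕ):ℂ)-1) + a₁*p + a₂*p) - 1 ≠ 0 := by
          have heq : ((((k+1:ℕ):ℂ)-1) + a₁*p + a₂*p) - 1 = (k:ℂ) + (p:ℂ) - 1 := by
            push_cast
            linear_combination (p:ℂ) * hsum
          rw [heq]
          intro h0
          have h1 : ((k + p : ℕ):ℂ) = ((1:ℕ):ℂ) := by push_cast; linear_combination h0
          exact hkp (Nat.cast_injective h1)
        have hz : (((((k+1:ℕ):ℂ)-1) + a₁*p + a₂*p) - 1) * cf (e k p p) (φ 1 * φ 2) = 0 := by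
          linear_combination hv
        exact (mul_eq_zero.1 hz).resolve_left hcoef
    · exact hw (k+p+q) k p q le_rfl hpq
  -- the coefficient γ₁ vanishes
  have hγ : cf (e 0 0 1) (φ 1) = 0 := by
    have h := hconj (Xv 1)
    rw [VF_NF_X1, pb_Xv] at h
    have hR := congrArg (cf (e 0 0 1)) h
    rw [cf_VF_NF] at hR
    have hAcc : cf (Finsupp.single 1 1) ((Cc (-l) + Cc a₁' * Xv 0 + csub (-c')) * Xv 1)
        = -l := by
      rw [mul_comm (Cc (-l) + Cc a₁' * Xv 0 + csub (-c')) (Xv 1), single1_e, cf_X_mul,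
        e_apply1, if_neg one_ne_zero, e_sub_single1]
      norm_num
      rw [← zero_eq_e, cf_add, cf_add, cf0_cc, cf0_cc]
      have h1 : MvPowerSeries.constantCoeff (Cc (-l)) = -l := by
        simp [Cc]
      have h2 : MvPowerSeries.constantCoeff (Cc a₁' * Xv 0) = 0 := by
        rw [map_mul]
        simp [Xv]
      have h3 : cf 0 (csub (-c')) = 0 := by
        rw [cf_csub]
        simp [h0c', hc']
      rw [h1, h2, h3]
      ring
    have hL : cf (e 0 0 1) (pb φ ((Cc (-l) + Cc a₁' * Xv 0 + csub (-c')) * Xv 1))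
        = -l * cf (e 0 0 1) (φ 1) := by
      rw [cf_pb, tsum_eq_single (Finsupp.single 1 1) ?_]
      · rw [Pw_single, hAcc]
      · intro m hm
        by_cases hdeg : deg m ≤ 1
        · have hm1 : m 1 = 0 := by
            by_contra h1
            apply hm
            have hd3 : m 0 + m 1 + m 2 ≤ 1 := hdeg
            rw [eq_e m, single1_e, e_eq_e]
            omega
          rw [mul_comm (Cc (-l) + Cc a₁' * Xv 0 + csub (-c')) (Xv 1), cf_X_mul,
            if_pos hm1, zero_mul]
        · rw [cf_Pw_eq_zero hφ0 (deg m) m (e 0 0 1) rfl ?_, mul_zero]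
          rw [deg_e]; omega
    rw [hL, if_pos rfl] at hR
    have hsz : (∑ j ∈ Finset.range (min 0 1 + 1),
        (PowerSeries.coeff j (-c) * ((0 - j : ℕ):ℂ)
          + PowerSeries.coeff j c * ((1 - j : ℕ):ℂ)) * cf (e 0 (0-j) (1-j)) (φ 1)) = 0 := by
      norm_num [h0c]
    rw [hsz] at hR
    have h2γ : (2*l) * cf (e 0 0 1) (φ 1) = 0 := by
      push_cast at hR
      linear_combination -hR
    exact (mul_eq_zero.1 h2γ).resolve_left (mul_ne_zero two_ne_zero hl)
  -- symplectic: β₁δ₂ = 1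
  have hsympc : cf (e 0 1 0) (φ 1) * cf (e 0 0 1) (φ 2)
      - cf (e 0 0 1) (φ 1) * cf (e 0 1 0) (φ 2) = 1 := by
    have h := congrArg (MvPowerSeries.constantCoeff) hsymp0
    rw [map_sub, map_mul, map_mul, map_one, cc_pd, cc_pd, cc_pd, cc_pd,
      single1_e, single2_e] at h
    exact h
  have hβδ : cf (e 0 1 0) (φ 1) * cf (e 0 0 1) (φ 2) = 1 := by
    rw [hγ, zero_mul, sub_zero] at hsympc
    exact hsympc
  have hβ : cf (e 0 1 0) (φ 1) ≠ 0 := left_ne_zero_of_mul_eq_one hβδ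
  -- v = y₁y₂
  have hμ : cf (e 0 1 1) (φ 1 * φ 2) = 1 := by
    rw [cf011_mul, cf0_cc, cf0_cc, hφ0 1, hφ0 2, hγ]
    rw [mul_zero, zero_mul, zero_mul, add_zero, zero_add, add_zero]
    exact hβδ
  have hvX : φ 1 * φ 2 = Xv 1 * Xv 2 := by
    refine R3_ext fun k p q => ?_
    rw [X1X2_eq, cf_monomial]
    by_cases h : k = 0 ∧ p = 1 ∧ q = 1
    · obtain ⟨rfl, rfl, rfl⟩ := h
      rw [if_pos rfl, hμ]
    · rw [hvconc k p q h, if_neg (fun hh => h (e_eq_e.1 hh))]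
  -- substitution fixes c'(y₁y₂)
  have hPwjj : ∀ j : ℕ, Pw φ (e 0 j j) = MvPowerSeries.monomial (e 0 j j) 1 := by
    intro j
    rw [Pw_e, pow_zero, one_mul, ← mul_pow, hvX, X1X2_pow]
  have hpbcsub : pb φ (csub c') = csub c' := by
    refine R3_ext fun k p q => ?_
    rw [cf_pb, tsum_eq_single (e k p q) ?_]
    · by_cases hsh : k = 0 ∧ p = q
      · obtain ⟨rfl, rfl⟩ := hsh
        rw [hPwjj p, cf_monomial, if_pos rfl, mul_one]
      · have hz : cf (e k p q) (csub c') = 0 := by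
          rw [cf_csub, if_neg]
          simp only [e_apply0, e_apply1, e_apply2]
          exact hsh
        rw [hz, zero_mul]
    · intro m hm
      by_cases hm' : m 0 = 0 ∧ m 1 = m 2
      · have hmE : m = e 0 (m 1) (m 1) := by
          conv_lhs => rw [eq_e m]
          rw [e_eq_e]
          exact ⟨hm'.1, rfl, hm'.2.symm⟩
        rw [hmE, hPwjj, cf_monomial, if_neg (fun hh => hm (by rw [hmE, ← hh])), mul_zero]
      · rw [cf_csub, if_neg hm', zero_mul]
  -- the equation for φ₁
  have hE1 : VF (NF l a₁ a₂ (-c) c) (φ 1)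
      = (Cc (-l) + Cc a₁' * Xv 0 + csub (-c')) * φ 1 := by
    have h := hconj (Xv 1)
    rw [VF_NF_X1, pb_mul φ hφ0, pb_Xv, pb_add φ hφ0, pb_add φ hφ0, pb_Cc,
      pb_mul φ hφ0, pb_Cc, pb_Xv, hfib, csub_neg, pb_neg φ hφ0, hpbcsub,
      ← csub_neg] at h
    exact h.symm
  have S1 : ∀ k p q : ℕ,
      (if k = 0 then 0 else (((k:ℂ)-1) + a₁*p + a₂*q) * cf (e (k-1) p q) (φ 1))
      + l * ((q:ℂ) - (p:ℂ)) * cf (e k p q) (φ 1)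
      + (∑ j ∈ Finset.range (min p q + 1),
          (PowerSeries.coeff j (-c) * ((p - j : ℕ):ℂ)
            + PowerSeries.coeff j c * ((q - j : ℕ):ℂ)) * cf (e k (p-j) (q-j)) (φ 1))
      = -l * cf (e k p q) (φ 1) + (if k = 0 then 0 else a₁' * cf (e (k-1) p q) (φ 1))
        + ∑ j ∈ Finset.range (min p q + 1),
            PowerSeries.coeff j (-c') * cf (e k (p-j) (q-j)) (φ 1) := by
    intro k p q
    have h := congrArg (cf (e k p q)) hE1
    rw [cf_VF_NF, cf_NFcomp_mul] at h
    exact h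
  have ha1 : a₁ = a₁' := by
    have h := S1 1 1 0
    rw [if_neg one_ne_zero, if_neg one_ne_zero] at h
    norm_num [map_neg, h0c, h0c'] at h
    have hh : a₁ * cf (e 0 1 0) (φ 1) = a₁' * cf (e 0 1 0) (φ 1) := by
      linear_combination h
    exact mul_right_cancel₀ hβ hh
  have hccj : ∀ j, PowerSeries.coeff j c = PowerSeries.coeff j c' := by
    intro j
    induction j using Nat.strong_induction_on with
    | _ j IH =>
      rcases Nat.eq_zero_or_pos j with rfl | hj
      · rw [h0c, h0c']
      · have h := S1 0 (j+1) j
        rw [if_pos rfl, if_pos rfl] at h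
        have hmin : min (j+1) j = j := by omega
        rw [hmin] at h
        have hA : ∀ i ∈ Finset.range (j+1),
            (PowerSeries.coeff i (-c) * ((j+1-i : ℕ):ℂ)
              + PowerSeries.coeff i c * ((j-i : ℕ):ℂ)) * cf (e 0 (j+1-i) (j-i)) (φ 1)
            = -(PowerSeries.coeff i c) * cf (e 0 (j+1-i) (j-i)) (φ 1) := by
          intro i hi
          rw [Finset.mem_range] at hi
          rw [map_neg]
          have c1 : ((j+1-i : ℕ):ℂ) = (j:ℂ) + 1 - (i:ℂ) := by
            rw [Nat.cast_sub (by omega)]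
            push_cast
            ring
          have c2 : ((j-i : ℕ):ℂ) = (j:ℂ) - (i:ℂ) := by
            rw [Nat.cast_sub (by omega)]
          rw [c1, c2]
          ring
        rw [Finset.sum_congr rfl hA] at h
        simp only [map_neg] at h
        have hl2 : l * ((j:ℂ) - ((j+1:ℕ):ℂ)) = -l := by push_cast; ring
        rw [hl2] at h
        have hsum0 : ∑ i ∈ Finset.range (j+1),
            (PowerSeries.coeff i c - PowerSeries.coeff i c')
              * cf (e 0 (j+1-i) (j-i)) (φ 1) = 0 := by
          have hsplit : ∑ i ∈ Finset.range (j+1),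
              (PowerSeries.coeff i c - PowerSeries.coeff i c')
                * cf (e 0 (j+1-i) (j-i)) (φ 1)
              = (∑ i ∈ Finset.range (j+1),
                  -PowerSeries.coeff i c' * cf (e 0 (j+1-i) (j-i)) (φ 1))
                - ∑ i ∈ Finset.range (j+1),
                    -PowerSeries.coeff i c * cf (e 0 (j+1-i) (j-i)) (φ 1) := by
            rw [← Finset.sum_sub_distrib]
            exact Finset.sum_congr rfl fun i _ => by ring
          rw [hsplit]
          linear_combination -h
        have hz : ∀ i ∈ Finset.range (j+1), i ≠ j →
            (PowerSeries.coeff i c - PowerSeries.coeff i c')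
              * cf (e 0 (j+1-i) (j-i)) (φ 1) = 0 := by
          intro i hi hne
          rw [Finset.mem_range] at hi
          rw [IH i (by omega), sub_self, zero_mul]
        have hterm := (Finset.sum_eq_single_of_mem j (Finset.self_mem_range_succ j)
          hz).symm.trans hsum0
        rw [show j + 1 - j = 1 by omega, Nat.sub_self] at hterm
        have := (mul_eq_zero.1 hterm).resolve_right hβ
        exact sub_eq_zero.1 this
  refine ⟨ha1, by linear_combination hsum - hsum' - ha1, ?_⟩
  exact PowerSeries.ext hccj

end
end

section
/- (i) For every formal diffeomorphism Φ of ℂ[[x₁,…,xₙ]] there exists a unique singular formal vector field F with F(𝔪) ⊆ 𝔪² such that Φ = φ ∘ exp(F), where φ is the linear diffeomorphism determined by the Jacobian matrix of Φ at 0. (ii) For each k ≥ 2, the exponential map X ↦ exp(X) is a bijection from the set of singular formal vector fields X with X(𝔪) ⊆ 𝔪^k onto the set of formal diffeomorphisms Φ with Φ(xᵢ) − xᵢ ∈ 𝔪^k for all i = 1,…,n. -/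
open MvPowerSeries

noncomputable section

/-- `Rn n` is the ring `ℂ[[x₁,…,xₙ]]` of formal power series in `n` variables. -/
abbrev Rn (n : ℕ) : Type := MvPowerSeries (Fin n) ℂ

/-- Build a formal power series from its coefficient function. -/
def mkn {n : ℕ} (g : (Fin n →₀ ℕ) → ℂ) : Rn n := g

/-- Coefficient of the monomial with exponents `m`. -/
def cfn {n : ℕ} (m : Fin n →₀ ℕ) (f : Rn n) : ℂ := MvPowerSeries.coeff (R := ℂ) m f

/-- Formal partial derivative with respect to the `i`-th variable. -/
def pdn {n : ℕ} (i : Fin n) (f : Rn n) : Rn n :=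
  mkn fun m => ((m i : ℂ) + 1) * cfn (m + Finsupp.single i 1) f

/-- The formal vector field (derivation) with components `b`, `∑ i, b i · ∂/∂xᵢ`. -/
def VFn {n : ℕ} (b : Fin n → Rn n) (f : Rn n) : Rn n := ∑ i, b i * pdn i f

/-- The maximal ideal `𝔪` of `ℂ[[x₁,…,xₙ]]`. -/
def mIn (n : ℕ) : Ideal (Rn n) := RingHom.ker (MvPowerSeries.constantCoeff (σ := Fin n) (R := ℂ))

/-- The variables. -/
def Xn {n : ℕ} (i : Fin n) : Rn n := MvPowerSeries.X i

/-- The exponential `exp(D)` of an operator, as the algebra map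
`f ↦ ∑_{k≥0} D^{∘k}(f)/k!`, defined coefficientwise (the inner series has only finitely
many nonzero terms when `D` is a singular vector field with `D(𝔪) ⊆ 𝔪²`). -/
def expD {n : ℕ} (D : Rn n → Rn n) (f : Rn n) : Rn n :=
  mkn fun m => ∑' k : ℕ, ((k.factorial : ℂ))⁻¹ * cfn m (D^[k] f)

/-- The adjoint operator `ad_X(D) = X ∘ D − D ∘ X`. -/
def adOp {n : ℕ} (X : Rn n → Rn n) (D : Rn n → Rn n) : Rn n → Rn n :=
  fun f => X (D f) - D (X f)

/-- Matrix of linear coefficients of a tuple of power series. -/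
def linMn {n : ℕ} (φ : Fin n → Rn n) : Matrix (Fin n) (Fin n) ℂ :=
  Matrix.of fun i j => cfn (Finsupp.single j 1) (φ i)

/-- `φ` is a formal diffeomorphism. -/
def IsDiffeoN {n : ℕ} (φ : Fin n → Rn n) : Prop :=
  (∀ i, MvPowerSeries.constantCoeff (σ := Fin n) (R := ℂ) (φ i) = 0) ∧ IsUnit (linMn φ).det


namespace ExpLog
variable {n : ℕ}

def degn (m : Fin n →₀ ℕ) : ℕ := ∑ i, m i

lemma cfn_mkn (g : (Fin n →₀ ℕ) → ℂ) (m : Fin n →₀ ℕ) : cfn m (mkn g) = g m :=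
  MvPowerSeries.coeff_apply (σ := Fin n) (R := ℂ) (mkn g) m

lemma degn_add (a b : Fin n →₀ ℕ) : degn (a + b) = degn a + degn b := by
  simp [degn, Finsupp.add_apply, Finset.sum_add_distrib]

lemma degn_eq_zero {m : Fin n →₀ ℕ} (h : degn m = 0) : m = 0 := by
  have := Finset.sum_eq_zero_iff.mp h
  ext i; exact this i (Finset.mem_univ i)

lemma degn_single (i : Fin n) : degn (Finsupp.single i 1) = 1 := by
  classical
  simp [degn, Finsupp.single_apply]

lemma degn_eq_one {m : Fin n →₀ ℕ} (h : degn m = 1) : ∃ i, m = Finsupp.single i 1 := by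
  classical
  have hne : ∃ i, m i ≠ 0 := by
    by_contra hc
    push_neg at hc
    have : m = 0 := by ext i; exact hc i
    rw [this] at h; simp [degn] at h
  obtain ⟨i, hi⟩ := hne
  refine ⟨i, ?_⟩
  have h1 : m i ≤ 1 := by
    rw [← h]; exact Finset.single_le_sum (f := fun j => m j) (fun j _ => Nat.zero_le _) (Finset.mem_univ i)
  have hmi : m i = 1 := le_antisymm h1 (Nat.one_le_iff_ne_zero.mpr hi)
  ext j
  rcases eq_or_ne j i with rfl | hj
  · simp [hmi]
  · have : m i + ∑ l ∈ Finset.univ.erase i, m l = 1 := by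
      rw [Finset.add_sum_erase _ _ (Finset.mem_univ i)]; exact h
    have hz : ∑ l ∈ Finset.univ.erase i, m l = 0 := by omega
    have h0 := Finset.sum_eq_zero_iff.mp hz
    rw [Finsupp.single_apply, if_neg (fun he : i = j => hj he.symm)]
    exact h0 j (Finset.mem_erase.mpr ⟨hj, Finset.mem_univ j⟩)

def OrdGE (d : ℕ) (f : Rn n) : Prop := ∀ m, degn m < d → cfn m f = 0

lemma OrdGE.mono {d e : ℕ} {f : Rn n} (h : OrdGE d f) (he : e ≤ d) : OrdGE e f :=
  fun m hm => h m (lt_of_lt_of_le hm he)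

lemma OrdGE_zero (d : ℕ) : OrdGE d (0 : Rn n) := by
  intro m _; simp [cfn]

lemma OrdGE.add {d : ℕ} {f g : Rn n} (hf : OrdGE d f) (hg : OrdGE d g) : OrdGE d (f + g) := by
  intro m hm
  have : cfn m (f + g) = cfn m f + cfn m g := map_add (MvPowerSeries.coeff (R := ℂ) m) f g
  rw [this, hf m hm, hg m hm, add_zero]

lemma OrdGE.neg {d : ℕ} {f : Rn n} (hf : OrdGE d f) : OrdGE d (-f) := by
  intro m hm
  have : cfn m (-f) = -cfn m f := map_neg (MvPowerSeries.coeff (R := ℂ) m) f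
  rw [this, hf m hm, neg_zero]

lemma OrdGE.sub {d : ℕ} {f g : Rn n} (hf : OrdGE d f) (hg : OrdGE d g) : OrdGE d (f - g) := by
  rw [sub_eq_add_neg]; exact hf.add hg.neg

lemma OrdGE.smul {d : ℕ} {c : ℂ} {f : Rn n} (hf : OrdGE d f) : OrdGE d (c • f) := by
  intro m hm
  have : cfn m (c • f) = c * cfn m f := by
    simp [cfn]
  rw [this, hf m hm, mul_zero]

lemma OrdGE.mul {a b : ℕ} {f g : Rn n} (hf : OrdGE a f) (hg : OrdGE b g) :
    OrdGE (a + b) (f * g) := by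
  classical
  intro m hm
  simp only [cfn, MvPowerSeries.coeff_mul]
  apply Finset.sum_eq_zero
  rintro ⟨p, q⟩ hpq
  rw [Finset.HasAntidiagonal.mem_antidiagonal] at hpq
  have hd : degn p + degn q < a + b := by
    rw [← degn_add, hpq]; exact hm
  rcases lt_or_ge (degn p) a with h | h
  · have := hf p h; simp only [cfn] at this; rw [this, zero_mul]
  · have hq : degn q < b := by omega
    have := hg q hq; simp only [cfn] at this
    rw [this, mul_zero]


lemma cfn_X (m : Fin n →₀ ℕ) (i : Fin n) :
    cfn m (Xn i) = if m = Finsupp.single i 1 then 1 else 0 := by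
  classical
  simp [cfn, Xn, MvPowerSeries.coeff_X]

lemma OrdGE_X (i : Fin n) : OrdGE 1 (Xn i) := by
  intro m hm
  have h0 : m = 0 := degn_eq_zero (Nat.lt_one_iff.mp hm)
  rw [cfn_X, if_neg]
  rw [h0]
  intro h
  have := degn_single i
  rw [← h] at this
  simp [degn] at this

lemma cfn_pdn (i : Fin n) (f : Rn n) (m : Fin n →₀ ℕ) :
    cfn m (pdn i f) = ((m i : ℂ) + 1) * cfn (m + Finsupp.single i 1) f := cfn_mkn _ m

lemma OrdGE.pd {d : ℕ} {f : Rn n} (hf : OrdGE (d + 1) f) (i : Fin n) :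
    OrdGE d (pdn i f) := by
  intro m hm
  rw [cfn_pdn, hf _ (by rw [degn_add, degn_single]; omega), mul_zero]

lemma OrdGE.vf {k d : ℕ} {F : Fin n → Rn n} {f : Rn n}
    (hF : ∀ i, OrdGE k (F i)) (hf : OrdGE (d + 1) f) : OrdGE (k + d) (VFn F f) := by
  intro m hm
  have hsum : cfn m (VFn F f) = ∑ i, cfn m (F i * pdn i f) := by
    simp [cfn, VFn, map_sum]
  rw [hsum]
  exact Finset.sum_eq_zero (fun i _ => ((hF i).mul (hf.pd i)) m hm)

lemma mem_mIn_iff {f : Rn n} : f ∈ mIn n ↔ cfn 0 f = 0 := by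
  rw [mIn, RingHom.mem_ker, cfn, MvPowerSeries.coeff_zero_eq_constantCoeff_apply]

lemma OrdGE_one_of_mem {f : Rn n} (hf : f ∈ mIn n) : OrdGE 1 f := by
  intro m hm
  have : m = 0 := degn_eq_zero (Nat.lt_one_iff.mp hm)
  rw [this]; exact mem_mIn_iff.mp hf

lemma OrdGE_of_mem_pow {k : ℕ} {f : Rn n} (hf : f ∈ mIn n ^ k) : OrdGE k f := by
  induction k generalizing f with
  | zero => intro m hm; omega
  | succ k ih =>
    rw [pow_succ] at hf
    refine Submodule.mul_induction_on hf ?_ ?_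
    · intro a ha b hb
      have := (ih ha).mul (OrdGE_one_of_mem hb)
      exact this.mono (by omega)
    · intro x y hx hy; exact hx.add hy

open scoped Classical in
/-- `chop i f` : the quotient series in greedy division of `f` by the variables. -/
def chop (i : Fin n) (f : Rn n) : Rn n :=
  mkn fun m => if ∀ j, j < i → m j = 0 then cfn (m + Finsupp.single i 1) f else 0

open scoped Classical in
lemma cfn_chop (i : Fin n) (f : Rn n) (m : Fin n →₀ ℕ) :
    cfn m (chop i f)
      = if ∀ j, j < i → m j = 0 then cfn (m + Finsupp.single i 1) f else 0 :=
  cfn_mkn _ m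

lemma coeff_X_mul (i : Fin n) (g : Rn n) (m : Fin n →₀ ℕ) :
    cfn m (Xn i * g) =
      if Finsupp.single i 1 ≤ m then cfn (m - Finsupp.single i 1) g else 0 := by
  classical
  have hX : Xn i = MvPowerSeries.monomial (R := ℂ) (Finsupp.single i 1) 1 := rfl
  rw [cfn, hX, MvPowerSeries.coeff_monomial_mul, one_mul]
  rfl

lemma single_apply_le {i : Fin n} {m : Fin n →₀ ℕ} (h : Finsupp.single i 1 ≤ m) :
    1 ≤ m i := by
  simpa [Finsupp.single_apply] using h i

lemma sub_single_apply (m : Fin n →₀ ℕ) (i j : Fin n) (hj : j ≠ i) :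
    ((m - Finsupp.single i 1 : Fin n →₀ ℕ)) j = m j := by
  rw [Finsupp.tsub_apply, Finsupp.single_apply, if_neg (fun h => hj h.symm)]
  omega

lemma X_mul_decomp {f : Rn n} (hf : cfn 0 f = 0) : f = ∑ i, Xn i * chop i f := by
  classical
  apply MvPowerSeries.ext
  intro m
  have hc : ∀ i, cfn m (Xn i * chop i f) =
      if Finsupp.single i 1 ≤ m ∧ ∀ j, j < i → m j = 0 then cfn m f else 0 := by
    intro i
    rw [coeff_X_mul]
    by_cases hle : Finsupp.single i 1 ≤ m
    · rw [if_pos hle, cfn_chop]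
      have hcond : (∀ j, j < i → ((m - Finsupp.single i 1 : Fin n →₀ ℕ)) j = 0) ↔ (∀ j, j < i → m j = 0) := by
        constructor <;> intro h j hji
        · rw [← sub_single_apply m i j (ne_of_lt hji)]; exact h j hji
        · rw [sub_single_apply m i j (ne_of_lt hji)]; exact h j hji
      have hback : m - Finsupp.single i 1 + Finsupp.single i 1 = m := by
        ext j
        rcases eq_or_ne j i with rfl | hj
        · have h1 : 1 ≤ m j := single_apply_le hle
          rw [Finsupp.add_apply, Finsupp.tsub_apply]
          simp [Finsupp.single_apply]
          omega
        · rw [Finsupp.add_apply, sub_single_apply m i j hj, Finsupp.single_apply,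
            if_neg (fun h : i = j => hj h.symm), add_zero]
      rw [hback]
      by_cases hcnd : ∀ j, j < i → m j = 0
      · rw [if_pos (hcond.mpr hcnd), if_pos ⟨hle, hcnd⟩]
      · rw [if_neg (fun h => hcnd (hcond.mp h)), if_neg (fun h => hcnd h.2)]
    · rw [if_neg hle, if_neg (fun h => hle h.1)]
  rw [show MvPowerSeries.coeff (R := ℂ) m (∑ i, Xn i * chop i f)
      = ∑ i, cfn m (Xn i * chop i f) from by rw [map_sum]; rfl]
  rw [show MvPowerSeries.coeff (R := ℂ) m f = cfn m f from rfl]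
  rcases eq_or_ne m 0 with rfl | hm
  · simp only [hc]
    rw [hf]
    symm
    apply Finset.sum_eq_zero
    intro i _
    rw [if_neg]
    rintro ⟨hle, -⟩
    have := single_apply_le hle
    simp at this
  · simp only [hc]
    have hsupp : m.support.Nonempty := by
      rw [Finsupp.support_nonempty_iff]; exact hm
    set i0 := m.support.min' hsupp with hi0def
    have hi0mem : i0 ∈ m.support := m.support.min'_mem hsupp
    have hi0ne : m i0 ≠ 0 := Finsupp.mem_support_iff.mp hi0mem
    have hmin : ∀ j, j < i0 → m j = 0 := by
      intro j hj
      by_contra hc2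
      exact absurd (m.support.min'_le j (Finsupp.mem_support_iff.mpr hc2)) (not_le.mpr hj)
    rw [Finset.sum_eq_single i0]
    · rw [if_pos ⟨Finsupp.single_le_iff.mpr (Nat.one_le_iff_ne_zero.mpr hi0ne), hmin⟩]
    · intro i _ hne
      rw [if_neg]
      rintro ⟨hle, hcnd⟩
      rcases lt_or_gt_of_ne hne with h | h
      · have h1 : 1 ≤ m i := single_apply_le hle
        have := hmin i h
        omega
      · exact hi0ne (hcnd i0 h)
    · intro h
      exact absurd (Finset.mem_univ i0) h

lemma X_mem_mIn (i : Fin n) : Xn i ∈ mIn n := by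
  apply mem_mIn_iff.mpr
  rw [cfn_X, if_neg]
  intro h
  have := degn_single i
  rw [← h] at this
  simp [degn] at this

lemma mem_pow_of_OrdGE {k : ℕ} {f : Rn n} (hf : OrdGE k f) : f ∈ mIn n ^ k := by
  classical
  induction k generalizing f with
  | zero => simp
  | succ k ih =>
    have hf0 : cfn 0 f = 0 := hf 0 (by simp [degn])
    rw [X_mul_decomp hf0, pow_succ']
    apply Ideal.sum_mem
    intro i _
    apply Ideal.mul_mem_mul (X_mem_mIn i)
    apply ih
    intro m hm
    rw [cfn_chop]
    by_cases hcnd : ∀ j, j < i → m j = 0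
    · rw [if_pos hcnd]
      exact hf _ (by rw [degn_add, degn_single]; omega)
    · rw [if_neg hcnd]

lemma mem_pow_iff_OrdGE {k : ℕ} {f : Rn n} : f ∈ mIn n ^ k ↔ OrdGE k f :=
  ⟨OrdGE_of_mem_pow, mem_pow_of_OrdGE⟩


lemma pdn_X (i j : Fin n) : pdn j (Xn i) = if i = j then 1 else 0 := by
  classical
  apply MvPowerSeries.ext
  intro m
  rw [show MvPowerSeries.coeff (R := ℂ) m (pdn j (Xn i)) = cfn m (pdn j (Xn i)) from rfl, cfn_pdn]
  rcases eq_or_ne i j with rfl | hij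
  · rw [if_pos rfl]
    rw [show cfn (m + Finsupp.single i 1) (Xn i)
        = if m + Finsupp.single i 1 = Finsupp.single i 1 then 1 else 0 from cfn_X _ i]
    rcases eq_or_ne m 0 with rfl | hm
    · simp
    · rw [if_neg, MvPowerSeries.coeff_one, if_neg hm, mul_zero]
      intro h
      exact hm (by simpa using add_right_cancel (h.trans (zero_add (Finsupp.single i 1)).symm))
  · rw [if_neg hij, cfn_X, if_neg, mul_zero, map_zero]
    intro h
    have := congrFun (congrArg (fun (u : Fin n →₀ ℕ) => (u : Fin n → ℕ)) h) j
    simp [Finsupp.single_apply, if_neg hij] at this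

lemma VFn_X (F : Fin n → Rn n) (i : Fin n) : VFn F (Xn i) = F i := by
  classical
  unfold VFn
  rw [Finset.sum_eq_single i]
  · rw [pdn_X, if_pos rfl, mul_one]
  · intro j _ hj
    rw [pdn_X, if_neg (fun h => hj h.symm), mul_zero]
  · intro h; exact absurd (Finset.mem_univ i) h

lemma VFn_zero (f : Rn n) : VFn (fun _ => (0 : Rn n)) f = 0 := by
  unfold VFn
  exact Finset.sum_eq_zero (fun i _ => zero_mul _)

lemma pdn_sub (i : Fin n) (f g : Rn n) : pdn i (f - g) = pdn i f - pdn i g := by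
  apply MvPowerSeries.ext
  intro m
  rw [map_sub]
  rw [show MvPowerSeries.coeff (R := ℂ) m (pdn i (f - g)) = cfn m (pdn i (f-g)) from rfl, cfn_pdn]
  rw [show MvPowerSeries.coeff (R := ℂ) m (pdn i f) = cfn m (pdn i f) from rfl, cfn_pdn]
  rw [show MvPowerSeries.coeff (R := ℂ) m (pdn i g) = cfn m (pdn i g) from rfl, cfn_pdn]
  rw [show cfn (m + Finsupp.single i 1) (f - g)
      = cfn (m + Finsupp.single i 1) f - cfn (m + Finsupp.single i 1) g from
    map_sub (MvPowerSeries.coeff (R := ℂ) _) f g]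
  ring

lemma VFn_apply_sub (F : Fin n → Rn n) (f g : Rn n) :
    VFn F (f - g) = VFn F f - VFn F g := by
  unfold VFn
  rw [← Finset.sum_sub_distrib]
  apply Finset.sum_congr rfl
  intro i _
  rw [pdn_sub, mul_sub]

lemma VFn_sub_VFn (F G : Fin n → Rn n) (f : Rn n) :
    VFn F f - VFn G f = VFn (fun l => F l - G l) f := by
  unfold VFn
  rw [← Finset.sum_sub_distrib]
  apply Finset.sum_congr rfl
  intro i _
  rw [sub_mul]

lemma iter_ordGE {k : ℕ} (hk : 2 ≤ k) {F : Fin n → Rn n} (hF : ∀ l, OrdGE k (F l))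
    (i : Fin n) : ∀ j, OrdGE (1 + (j+1)*(k-1)) ((VFn F)^[j+1] (Xn i)) := by
  intro j
  induction j with
  | zero =>
    rw [Function.iterate_one, VFn_X]
    exact (hF i).mono (by omega)
  | succ j ih =>
    rw [Function.iterate_succ_apply']
    have h1 : OrdGE ((j+1)*(k-1) + 1) ((VFn F)^[j+1] (Xn i)) := ih.mono (by omega)
    refine (OrdGE.vf hF h1).mono ?_
    have hexp : (j+1+1)*(k-1) = (j+1)*(k-1) + (k-1) := by ring
    omega

lemma iter_ordGE2 {F : Fin n → Rn n} (hF : ∀ l, OrdGE 2 (F l)) (i : Fin n) :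
    ∀ j, OrdGE (j + 1) ((VFn F)^[j] (Xn i)) := by
  intro j
  cases j with
  | zero => simpa using OrdGE_X i
  | succ j =>
    have := iter_ordGE (le_refl 2) hF i j
    exact this.mono (by omega)

lemma expD_coeff {F : Fin n → Rn n} (hF : ∀ l, OrdGE 2 (F l)) (i : Fin n) (m : Fin n →₀ ℕ) :
    cfn m (expD (VFn F) (Xn i))
      = ∑ j ∈ Finset.range (degn m), ((j.factorial : ℂ))⁻¹ * cfn m ((VFn F)^[j] (Xn i)) := by
  rw [show cfn m (expD (VFn F) (Xn i))
      = ∑' j : ℕ, ((j.factorial : ℂ))⁻¹ * cfn m ((VFn F)^[j] (Xn i)) from cfn_mkn _ m]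
  apply tsum_eq_sum
  intro j hj
  rw [Finset.mem_range, not_lt] at hj
  rw [iter_ordGE2 hF i j m (by omega), mul_zero]

lemma expD_VFn_zero (i : Fin n) : expD (VFn (fun _ => (0 : Rn n))) (Xn i) = Xn i := by
  apply MvPowerSeries.ext
  intro m
  rw [show MvPowerSeries.coeff (R := ℂ) m (expD (VFn (fun _ => (0:Rn n))) (Xn i))
      = ∑' j : ℕ, ((j.factorial : ℂ))⁻¹ * cfn m ((VFn (fun _ => (0:Rn n)))^[j] (Xn i)) from
    cfn_mkn _ m]
  rw [tsum_eq_sum (s := {0}) ?_]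
  · simp [cfn]
  · intro j hj
    rw [Finset.mem_singleton] at hj
    obtain ⟨j', rfl⟩ := Nat.exists_eq_succ_of_ne_zero hj
    rw [Function.iterate_succ_apply', VFn_zero]
    simp [cfn]

lemma iter_diff {k : ℕ} (hk : 2 ≤ k) {F G : Fin n → Rn n}
    (hF : ∀ l, OrdGE k (F l)) (hG : ∀ l, OrdGE k (G l)) {d : ℕ} (hd1 : 1 ≤ d)
    (hd : ∀ l, OrdGE d (F l - G l)) (i : Fin n) :
    ∀ j, OrdGE (d + j*(k-1)) ((VFn F)^[j+1] (Xn i) - (VFn G)^[j+1] (Xn i)) := by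
  intro j
  induction j with
  | zero =>
    rw [Function.iterate_one, Function.iterate_one, VFn_X, VFn_X]
    exact (hd i).mono (by omega)
  | succ j ih =>
    set A := (VFn F)^[j+1] (Xn i) with hA
    set B := (VFn G)^[j+1] (Xn i) with hB
    have hsplit : VFn F A - VFn G B = VFn F (A - B) + VFn (fun l => F l - G l) B := by
      rw [VFn_apply_sub, ← VFn_sub_VFn]
      ring
    have hiter : (VFn F)^[j+1+1] (Xn i) - (VFn G)^[j+1+1] (Xn i) = VFn F A - VFn G B := by
      rw [hA, hB, ← Function.iterate_succ_apply' (VFn F) (j+1),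
        ← Function.iterate_succ_apply' (VFn G) (j+1)]
    rw [hiter, hsplit]
    have hs1 : 1 ≤ d + j*(k-1) := by omega
    obtain ⟨s', hs'⟩ : ∃ s', d + j*(k-1) = s' + 1 := ⟨d + j*(k-1) - 1, by omega⟩
    have h1 : OrdGE (d + (j+1)*(k-1)) (VFn F (A - B)) := by
      have hvf := OrdGE.vf hF (hs' ▸ ih)
      refine hvf.mono ?_
      have hexp : (j+1)*(k-1) = j*(k-1) + (k-1) := by ring
      omega
    have h2 : OrdGE (d + (j+1)*(k-1)) (VFn (fun l => F l - G l) B) := by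
      have hBord : OrdGE ((j+1)*(k-1) + 1) B := (iter_ordGE hk hG i j).mono (by omega)
      exact (OrdGE.vf hd hBord).mono (by omega)
    exact h1.add h2

lemma lipschitz {k : ℕ} (hk : 2 ≤ k) {F G : Fin n → Rn n}
    (hF : ∀ l, OrdGE k (F l)) (hG : ∀ l, OrdGE k (G l)) {d : ℕ} (hd1 : 1 ≤ d)
    (hd : ∀ l, OrdGE d (F l - G l)) (i : Fin n) :
    OrdGE (d + 1) (expD (VFn F) (Xn i) - expD (VFn G) (Xn i) - (F i - G i)) := by
  intro m hm
  have hF2 : ∀ l, OrdGE 2 (F l) := fun l => (hF l).mono hk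
  have hG2 : ∀ l, OrdGE 2 (G l) := fun l => (hG l).mono hk
  rw [show cfn m (expD (VFn F) (Xn i) - expD (VFn G) (Xn i) - (F i - G i))
      = cfn m (expD (VFn F) (Xn i)) - cfn m (expD (VFn G) (Xn i))
        - (cfn m (F i) - cfn m (G i)) from by
    simp only [cfn, map_sub]]
  rw [expD_coeff hF2, expD_coeff hG2, ← Finset.sum_sub_distrib]
  have hFG : cfn m (F i) = cfn m (G i) → True := fun _ => trivial
  have hsum : (∑ j ∈ Finset.range (degn m),
      (((j.factorial : ℂ))⁻¹ * cfn m ((VFn F)^[j] (Xn i))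
        - ((j.factorial : ℂ))⁻¹ * cfn m ((VFn G)^[j] (Xn i))))
      = cfn m (F i) - cfn m (G i) := by
    have hval1 : ((Nat.factorial 1 : ℂ))⁻¹ * cfn m ((VFn F)^[1] (Xn i))
        - ((Nat.factorial 1 : ℂ))⁻¹ * cfn m ((VFn G)^[1] (Xn i))
        = cfn m (F i) - cfn m (G i) := by
      rw [Function.iterate_one, Function.iterate_one, VFn_X, VFn_X]
      simp
    rw [Finset.sum_eq_single 1]
    · exact hval1
    · intro j hjmem hjne
      match j with
      | 0 => simp
      | 1 => exact absurd rfl hjne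
      | (j'+2) =>
        have hdiff := iter_diff hk hF hG hd1 hd i (j'+1)
        have hcz : cfn m ((VFn F)^[j'+2] (Xn i)) - cfn m ((VFn G)^[j'+2] (Xn i)) = 0 := by
          rw [show cfn m ((VFn F)^[j'+2] (Xn i)) - cfn m ((VFn G)^[j'+2] (Xn i))
              = cfn m ((VFn F)^[j'+2] (Xn i) - (VFn G)^[j'+2] (Xn i)) from
            (map_sub (MvPowerSeries.coeff (R := ℂ) m) _ _).symm]
          apply hdiff
          have : 2 ≤ k := hk
          have : 1 ≤ (j'+1)*(k-1) := by
            have : 1 ≤ k - 1 := by omega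
            calc 1 = 1*1 := by ring
            _ ≤ (j'+1)*(k-1) := Nat.mul_le_mul (by omega) this
          omega
        rw [← mul_sub, hcz, mul_zero]
    · intro h1
      rw [Finset.mem_range, not_lt] at h1
      rw [hval1]
      have hm2 : degn m < k := by omega
      rw [(hF i) m hm2, (hG i) m hm2, sub_zero]
  rw [hsum, sub_self]


lemma cfn_sub (m : Fin n →₀ ℕ) (f g : Rn n) : cfn m (f - g) = cfn m f - cfn m g :=
  map_sub (MvPowerSeries.coeff (R := ℂ) m) f g

lemma eq_of_forall_ordGE {f g : Rn n} (h : ∀ N, OrdGE N (f - g)) : f = g := by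
  apply MvPowerSeries.ext
  intro m
  have := h (degn m + 1) m (by omega)
  rw [cfn_sub] at this
  have := sub_eq_zero.mp this
  exact this

lemma expD_sub_X_ordGE {k : ℕ} (hk : 2 ≤ k) {F : Fin n → Rn n}
    (hF : ∀ l, OrdGE k (F l)) (i : Fin n) :
    OrdGE k (expD (VFn F) (Xn i) - Xn i) := by
  intro m hm
  have hF2 : ∀ l, OrdGE 2 (F l) := fun l => (hF l).mono hk
  rw [cfn_sub, expD_coeff hF2]
  have hsum : (∑ j ∈ Finset.range (degn m),
      ((j.factorial : ℂ))⁻¹ * cfn m ((VFn F)^[j] (Xn i))) = cfn m (Xn i) := by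
    rw [Finset.sum_eq_single 0]
    · simp
    · intro j _ hjne
      obtain ⟨j', rfl⟩ := Nat.exists_eq_succ_of_ne_zero hjne
      have := iter_ordGE hk hF i j'
      rw [this m ?_, mul_zero]
      have h1 : k - 1 ≤ (j'+1)*(k-1) := Nat.le_mul_of_pos_left _ (by omega)
      omega
    · intro h0
      rw [Finset.mem_range, not_lt] at h0
      have hm0 : degn m = 0 := by omega
      simp only [Function.iterate_zero_apply, Nat.factorial_zero, Nat.cast_one, inv_one, one_mul]
      exact OrdGE_X i m (by omega)
  rw [hsum, sub_self]

lemma exp_injective {k : ℕ} (hk : 2 ≤ k) {F G : Fin n → Rn n}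
    (hF : ∀ l, OrdGE k (F l)) (hG : ∀ l, OrdGE k (G l))
    (heq : ∀ i, expD (VFn F) (Xn i) = expD (VFn G) (Xn i)) : F = G := by
  by_contra hne
  have hex : ∃ d : ℕ, ∃ i : Fin n, ∃ m : Fin n →₀ ℕ, degn m = d ∧ cfn m (F i - G i) ≠ 0 := by
    obtain ⟨i, hi⟩ := Function.ne_iff.mp hne
    have hsub : F i - G i ≠ 0 := sub_ne_zero.mpr hi
    have : ∃ m, cfn m (F i - G i) ≠ 0 := by
      by_contra hc
      push_neg at hc
      exact hsub (MvPowerSeries.ext fun m => by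
        rw [show (MvPowerSeries.coeff (R := ℂ) m) (F i - G i) = cfn m (F i - G i) from rfl, hc m,
          map_zero])
    obtain ⟨m, hm⟩ := this
    exact ⟨degn m, i, m, rfl, hm⟩
  classical
  set d0 := Nat.find hex with hd0
  obtain ⟨i0, m0, hm0deg, hm0ne⟩ := Nat.find_spec hex
  have hlow : ∀ l, OrdGE d0 (F l - G l) := by
    intro l m hm
    by_contra hc
    exact absurd hm (not_lt.mpr (Nat.find_le ⟨l, m, rfl, hc⟩))
  have hd1 : 1 ≤ d0 := by
    by_contra hc
    have hz : degn m0 = 0 := by omega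
    have := ((hF i0).sub (hG i0)) m0 (by omega)
    exact hm0ne this
  have hlip := lipschitz hk hF hG hd1 hlow i0
  rw [heq i0, sub_self, zero_sub] at hlip
  have : cfn m0 (-(F i0 - G i0)) = 0 := hlip m0 (by omega)
  rw [show cfn m0 (-(F i0 - G i0)) = -(cfn m0 (F i0 - G i0)) from
    map_neg (MvPowerSeries.coeff (R := ℂ) m0) _] at this
  rw [neg_eq_zero] at this
  exact hm0ne this

/-- Successive approximations to the logarithm of `ψ`. -/
def seqF (ψ : Fin n → Rn n) : ℕ → Fin n → Rn n
  | 0 => fun i => ψ i - Xn i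
  | (t+1) => fun i => seqF ψ t i + (ψ i - expD (VFn (seqF ψ t)) (Xn i))

/-- Coefficientwise limit of the successive approximations. -/
def limF (ψ : Fin n → Rn n) : Fin n → Rn n :=
  fun i => mkn fun m => cfn m (seqF ψ (degn m + 1) i)

variable {k : ℕ} {ψ : Fin n → Rn n}

lemma seqF_invariant (hk : 2 ≤ k) (hψ : ∀ i, OrdGE k (ψ i - Xn i)) :
    ∀ t, (∀ i, OrdGE k (seqF ψ t i)) ∧
      (∀ i, OrdGE (k + t) (ψ i - expD (VFn (seqF ψ t)) (Xn i))) := by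
  intro t
  induction t with
  | zero =>
    have ha : ∀ i, OrdGE k (seqF ψ 0 i) := fun i => hψ i
    refine ⟨ha, fun i => ?_⟩
    have hG : ∀ l, OrdGE k ((fun _ : Fin n => (0 : Rn n)) l) := fun l => OrdGE_zero k
    have hd : ∀ l, OrdGE k (seqF ψ 0 l - (fun _ : Fin n => (0:Rn n)) l) := by
      intro l; simpa using ha l
    have hlip := lipschitz hk ha hG (by omega) hd i
    rw [expD_VFn_zero, sub_zero] at hlip
    have hkey : ψ i - expD (VFn (seqF ψ 0)) (Xn i)
        = -(expD (VFn (seqF ψ 0)) (Xn i) - Xn i - seqF ψ 0 i) := by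
      have : seqF ψ 0 i = ψ i - Xn i := rfl
      rw [this]; ring
    rw [hkey]
    exact (hlip.neg).mono (by omega)
  | succ t ih =>
    obtain ⟨iha, ihb⟩ := ih
    have hGF : ∀ l, seqF ψ (t+1) l - seqF ψ t l = ψ l - expD (VFn (seqF ψ t)) (Xn l) := by
      intro l
      show seqF ψ t l + (ψ l - expD (VFn (seqF ψ t)) (Xn l)) - seqF ψ t l = _
      ring
    have ha : ∀ i, OrdGE k (seqF ψ (t+1) i) := by
      intro i
      show OrdGE k (seqF ψ t i + (ψ i - expD (VFn (seqF ψ t)) (Xn i)))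
      exact (iha i).add ((ihb i).mono (by omega))
    refine ⟨ha, fun i => ?_⟩
    have hd : ∀ l, OrdGE (k + t) (seqF ψ (t+1) l - seqF ψ t l) := by
      intro l; rw [hGF l]; exact ihb l
    have hlip := lipschitz hk ha iha (by omega) hd i
    have hkey : ψ i - expD (VFn (seqF ψ (t+1))) (Xn i)
        = -(expD (VFn (seqF ψ (t+1))) (Xn i) - expD (VFn (seqF ψ t)) (Xn i)
            - (seqF ψ (t+1) i - seqF ψ t i)) := by
      rw [hGF i]; ring
    rw [hkey]
    exact hlip.neg.mono (by omega)

lemma seqF_stable (hk : 2 ≤ k) (hψ : ∀ i, OrdGE k (ψ i - Xn i)) :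
    ∀ a b, a ≤ b → ∀ i, OrdGE (k + a) (seqF ψ b i - seqF ψ a i) := by
  intro a b hab
  induction b, hab using Nat.le_induction with
  | base => intro i; rw [sub_self]; exact OrdGE_zero _
  | succ b hab ih =>
    intro i
    have h1 : OrdGE (k + a) (seqF ψ (b+1) i - seqF ψ b i) := by
      have : seqF ψ (b+1) i - seqF ψ b i = ψ i - expD (VFn (seqF ψ b)) (Xn i) := by
        show seqF ψ b i + (ψ i - expD (VFn (seqF ψ b)) (Xn i)) - seqF ψ b i = _
        ring
      rw [this]
      exact ((seqF_invariant hk hψ b).2 i).mono (by omega)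
    have hsplit : seqF ψ (b+1) i - seqF ψ a i
        = (seqF ψ (b+1) i - seqF ψ b i) + (seqF ψ b i - seqF ψ a i) := by ring
    rw [hsplit]
    exact h1.add (ih i)

lemma limF_sub (hk : 2 ≤ k) (hψ : ∀ i, OrdGE k (ψ i - Xn i)) (t : ℕ) (i : Fin n) :
    OrdGE (k + t) (limF ψ i - seqF ψ t i) := by
  intro m hm
  rw [cfn_sub]
  rw [show cfn m (limF ψ i) = cfn m (seqF ψ (degn m + 1) i) from cfn_mkn _ m]
  set u := max t (degn m + 1) with hu
  have h1 : cfn m (seqF ψ u i) = cfn m (seqF ψ (degn m + 1) i) := by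
    have := seqF_stable hk hψ (degn m + 1) u (le_max_right _ _) i m (by omega)
    rw [cfn_sub] at this
    exact sub_eq_zero.mp this
  have h2 : cfn m (seqF ψ u i) = cfn m (seqF ψ t i) := by
    have := seqF_stable hk hψ t u (le_max_left _ _) i m (by omega)
    rw [cfn_sub] at this
    exact sub_eq_zero.mp this
  rw [← h1, h2, sub_self]

lemma limF_ordGE (hk : 2 ≤ k) (hψ : ∀ i, OrdGE k (ψ i - Xn i)) (i : Fin n) :
    OrdGE k (limF ψ i) := by
  have h1 := (limF_sub hk hψ 0 i).mono (by omega : k ≤ k + 0)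
  have h2 := (seqF_invariant hk hψ 0).1 i
  have : limF ψ i = (limF ψ i - seqF ψ 0 i) + seqF ψ 0 i := by ring
  rw [this]
  exact h1.add h2

lemma limF_exp (hk : 2 ≤ k) (hψ : ∀ i, OrdGE k (ψ i - Xn i)) (i : Fin n) :
    expD (VFn (limF ψ)) (Xn i) = ψ i := by
  apply eq_of_forall_ordGE
  intro N
  set t := N with ht
  have hlim := limF_ordGE hk hψ
  have hFt := (seqF_invariant hk hψ t).1
  have hd := limF_sub hk hψ t
  have hlip := lipschitz hk hlim hFt (by omega) (fun l => hd l) i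
  have hkey : expD (VFn (limF ψ)) (Xn i) - ψ i
      = (expD (VFn (limF ψ)) (Xn i) - expD (VFn (seqF ψ t)) (Xn i)
          - (limF ψ i - seqF ψ t i))
        + (limF ψ i - seqF ψ t i)
        - (ψ i - expD (VFn (seqF ψ t)) (Xn i)) := by ring
  rw [hkey]
  have hb := (seqF_invariant hk hψ t).2 i
  exact ((hlip.mono (by omega)).add ((hd i).mono (by omega))).sub (hb.mono (by omega))

lemma expD_isDiffeo {k : ℕ} (hk : 2 ≤ k) {F : Fin n → Rn n} (hF : ∀ l, OrdGE k (F l)) :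
    IsDiffeoN (fun i => expD (VFn F) (Xn i)) := by
  constructor
  · intro i
    show (MvPowerSeries.constantCoeff (σ := Fin n) (R := ℂ)) (expD (VFn F) (Xn i)) = 0
    rw [← MvPowerSeries.coeff_zero_eq_constantCoeff_apply]
    have h1 : expD (VFn F) (Xn i) = (expD (VFn F) (Xn i) - Xn i) + Xn i := by ring
    rw [h1, map_add]
    rw [show MvPowerSeries.coeff (R := ℂ) 0 (expD (VFn F) (Xn i) - Xn i)
        = cfn 0 (expD (VFn F) (Xn i) - Xn i) from rfl]
    rw [expD_sub_X_ordGE hk hF i 0 (by simp [degn]; omega)]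
    rw [show MvPowerSeries.coeff (R := ℂ) 0 (Xn i) = cfn 0 (Xn i) from rfl]
    rw [OrdGE_X i 0 (by simp [degn])]
    ring
  · have hlin : linMn (fun i => expD (VFn F) (Xn i)) = 1 := by
      apply Matrix.ext
      intro i j
      show cfn (Finsupp.single j 1) (expD (VFn F) (Xn i)) = (1 : Matrix (Fin n) (Fin n) ℂ) i j
      have h1 : expD (VFn F) (Xn i) = (expD (VFn F) (Xn i) - Xn i) + Xn i := by ring
      rw [h1, show cfn (Finsupp.single j 1) ((expD (VFn F) (Xn i) - Xn i) + Xn i)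
          = cfn (Finsupp.single j 1) (expD (VFn F) (Xn i) - Xn i)
            + cfn (Finsupp.single j 1) (Xn i) from map_add (MvPowerSeries.coeff (R := ℂ) _) _ _]
      rw [expD_sub_X_ordGE hk hF i _ (by rw [degn_single]; omega), zero_add]
      rw [cfn_X, Matrix.one_apply]
      rcases eq_or_ne i j with rfl | hij
      · rw [if_pos rfl, if_pos rfl]
      · rw [if_neg (fun h => hij ((Finsupp.single_left_inj one_ne_zero).mp h).symm),
          if_neg hij]
    rw [hlin, Matrix.det_one]
    exact isUnit_one


lemma cfn_smul (c : ℂ) (f : Rn n) (m : Fin n →₀ ℕ) : cfn m (c • f) = c * cfn m f := by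
  rw [cfn, map_smul, smul_eq_mul]; rfl

lemma cfn_finsum (m : Fin n →₀ ℕ) (g : Fin n → Rn n) :
    cfn m (∑ j, g j) = ∑ j, cfn m (g j) := by
  rw [cfn, map_sum]; rfl

lemma matrix_inv_sum (A B : Matrix (Fin n) (Fin n) ℂ) (h : A * B = 1)
    (g : Fin n → Rn n) (i : Fin n) :
    ∑ j, A i j • (∑ l, B j l • g l) = g i := by
  classical
  have h1 : ∀ j, A i j • (∑ l, B j l • g l) = ∑ l, (A i j * B j l) • g l := by
    intro j
    rw [Finset.smul_sum]
    exact Finset.sum_congr rfl (fun l _ => (smul_smul _ _ _))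
  simp only [h1]
  rw [Finset.sum_comm]
  have h2 : ∀ l, (∑ j, (A i j * B j l) • g l) = ((A * B) i l) • g l := by
    intro l
    rw [Matrix.mul_apply, Finset.sum_smul]
  simp only [h2, h]
  have h3 : ∀ l, ((1 : Matrix (Fin n) (Fin n) ℂ) i l) • g l
      = if i = l then g l else 0 := by
    intro l
    rw [Matrix.one_apply]
    by_cases hil : i = l
    · rw [if_pos hil, if_pos hil, one_smul]
    · rw [if_neg hil, if_neg hil, zero_smul]
  simp only [h3]
  rw [Finset.sum_ite_eq]
  simp

/-- Part (ii) of the theorem, in `OrdGE` language already proved; assembled. -/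
lemma part2 (k : ℕ) (hk : 2 ≤ k) :
    Set.BijOn (fun (F : Fin n → Rn n) => fun i => expD (VFn F) (Xn i))
      {F | ∀ i, F i ∈ mIn n ^ k}
      {ψ | IsDiffeoN ψ ∧ ∀ i, ψ i - Xn i ∈ mIn n ^ k} := by
  refine ⟨?_, ?_, ?_⟩
  · intro F hF
    have hF' : ∀ l, OrdGE k (F l) := fun l => OrdGE_of_mem_pow (hF l)
    refine ⟨expD_isDiffeo hk hF', fun i => ?_⟩
    exact mem_pow_of_OrdGE (expD_sub_X_ordGE hk hF' i)
  · intro F hF G hG heq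
    exact exp_injective hk (fun l => OrdGE_of_mem_pow (hF l))
      (fun l => OrdGE_of_mem_pow (hG l)) (fun i => congrFun heq i)
  · intro ψ hψ
    obtain ⟨hdiff, htang⟩ := hψ
    have hψ' : ∀ i, OrdGE k (ψ i - Xn i) := fun i => OrdGE_of_mem_pow (htang i)
    refine ⟨limF ψ, fun i => mem_pow_of_OrdGE (limF_ordGE hk hψ' i), ?_⟩
    funext i
    exact limF_exp hk hψ' i

/-- Part (i) of the theorem. -/
lemma part1 (φ : Fin n → Rn n) (hφ : IsDiffeoN φ) :
    ∃! F : Fin n → Rn n, (∀ i, F i ∈ mIn n ^ 2) ∧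
      ∀ i, φ i = ∑ j : Fin n,
        cfn (Finsupp.single j 1) (φ i) • expD (VFn F) (Xn j) := by
  obtain ⟨hconst, hdet⟩ := hφ
  set J := linMn φ with hJdef
  have hJJ : J⁻¹ * J = 1 := Matrix.nonsing_inv_mul J hdet
  have hJJ' : J * J⁻¹ = 1 := Matrix.mul_nonsing_inv J hdet
  set ψ : Fin n → Rn n := fun i => ∑ j, J⁻¹ i j • φ j with hψdef
  have hφJ : ∀ i j, cfn (Finsupp.single j 1) (φ i) = J i j := fun i j => rfl
  have hcfnψ : ∀ (m : Fin n →₀ ℕ) i, cfn m (ψ i) = ∑ j, J⁻¹ i j * cfn m (φ j) := by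
    intro m i
    rw [hψdef]
    rw [cfn_finsum]
    exact Finset.sum_congr rfl (fun j _ => cfn_smul _ _ _)
  have hψlin : ∀ i l, cfn (Finsupp.single l 1) (ψ i) = if i = l then 1 else 0 := by
    intro i l
    rw [hcfnψ]
    have he : ∀ j, J⁻¹ i j * cfn (Finsupp.single l 1) (φ j) = J⁻¹ i j * J j l := by
      intro j; rw [hφJ]
    rw [Finset.sum_congr rfl (fun j _ => he j), ← Matrix.mul_apply, hJJ, Matrix.one_apply]
  have hψord : ∀ i, OrdGE 2 (ψ i - Xn i) := by
    intro i m hm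
    rw [cfn_sub]
    have hcases : degn m = 0 ∨ degn m = 1 := by omega
    rcases hcases with h0 | h1
    · have hm0 : m = 0 := degn_eq_zero h0
      subst hm0
      rw [hcfnψ, OrdGE_X i 0 (by simp [degn])]
      have : ∀ j, J⁻¹ i j * cfn 0 (φ j) = 0 := by
        intro j
        rw [show cfn 0 (φ j) = MvPowerSeries.constantCoeff (σ := Fin n) (R := ℂ) (φ j) from
          MvPowerSeries.coeff_zero_eq_constantCoeff_apply _, hconst j, mul_zero]
      rw [Finset.sum_eq_zero (fun j _ => this j)]
      ring
    · obtain ⟨l, rfl⟩ := degn_eq_one h1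
      rw [hψlin, cfn_X]
      rcases eq_or_ne i l with rfl | hil
      · rw [if_pos rfl, if_pos rfl, sub_self]
      · rw [if_neg hil, if_neg (fun h => hil ((Finsupp.single_left_inj one_ne_zero).mp h).symm),
          sub_self]
  obtain ⟨hFmem, hFeq⟩ : (∀ l, OrdGE 2 (limF ψ l)) ∧ ∀ i, expD (VFn (limF ψ)) (Xn i) = ψ i :=
    ⟨fun l => limF_ordGE le_rfl hψord l, fun i => limF_exp le_rfl hψord i⟩
  refine ⟨limF ψ, ⟨fun i => mem_pow_of_OrdGE (hFmem i), ?_⟩, ?_⟩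
  · intro i
    have : (∑ j, cfn (Finsupp.single j 1) (φ i) • expD (VFn (limF ψ)) (Xn j))
        = ∑ j, J i j • ψ j := by
      apply Finset.sum_congr rfl
      intro j _
      rw [hφJ, hFeq]
    rw [this, hψdef]
    exact (matrix_inv_sum J J⁻¹ hJJ' φ i).symm
  · rintro F' ⟨hF'mem, hF'eq⟩
    have hexp : ∀ l, expD (VFn F') (Xn l) = ψ l := by
      intro l
      have : ψ l = ∑ i, J⁻¹ l i • (∑ j, J i j • expD (VFn F') (Xn j)) := by
        rw [hψdef]
        apply Finset.sum_congr rfl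
        intro i _
        rw [show (∑ j, J i j • expD (VFn F') (Xn j))
            = ∑ j, cfn (Finsupp.single j 1) (φ i) • expD (VFn F') (Xn j) from
          Finset.sum_congr rfl (fun j _ => by rw [hφJ]), ← hF'eq i]
      rw [this, matrix_inv_sum J⁻¹ J hJJ (fun j => expD (VFn F') (Xn j)) l]
    apply exp_injective (le_refl 2) (fun l => OrdGE_of_mem_pow (hF'mem l)) hFmem
    intro i
    rw [hexp i, hFeq i]

end ExpLog

/-- **Existence of the logarithm, and bijectivity of the exponential map.**
(i) Every formal diffeomorphism `Φ` factors uniquely as `φ ∘ exp(F)` with `F(𝔪) ⊆ 𝔪²`,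
where `φ` is the linear diffeomorphism given by the Jacobian of `Φ` at `0` (so that the
`i`-th component of `Φ` is `∑ⱼ Jᵢⱼ · exp(F)*(xⱼ)`).
(ii) For `k ≥ 2`, `F ↦ exp(F)` is a bijection from vector fields with components in `𝔪^k`
onto formal diffeomorphisms tangent to the identity up to order `k-1`. -/
theorem exp_log_bijection (n : ℕ) :
    (∀ φ : Fin n → Rn n, IsDiffeoN φ →
      ∃! F : Fin n → Rn n, (∀ i, F i ∈ mIn n ^ 2) ∧
        ∀ i, φ i = ∑ j : Fin n,
          cfn (Finsupp.single j 1) (φ i) • expD (VFn F) (Xn j)) ∧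
    (∀ k : ℕ, 2 ≤ k →
      Set.BijOn (fun (F : Fin n → Rn n) => fun i => expD (VFn F) (Xn i))
        {F | ∀ i, F i ∈ mIn n ^ k}
        {ψ | IsDiffeoN ψ ∧ ∀ i, ψ i - Xn i ∈ mIn n ^ k}) :=
  ⟨fun φ hφ => ExpLog.part1 φ hφ, fun k hk => ExpLog.part2 k hk⟩

end
end
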